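/- arXiv:2412.06406 — 8 statements merged into one kernel-verified Lean document; each statement's English description precedes it below -/
import Mathlib

section
/- Let p ≥ 2 be an integer, S_p(x) = px mod 1 on [0,1), μ a Borel probability measure on [0,1), and φ : [0,1] → [0,1] its distribution function φ(x) = μ([0,x)). Then μ is invariant under S_p if and only if φ(x) = Σ_{k=0}^{p−1} [φ((x+k)/p) − φ(k/p)] for every x ∈ [0,1]. -/
open MeasureTheory Set

lemma padic_preimage (p : ℕ) (hp : 2 ≤ p) (x : ℝ) (hx : x ∈ Icc (0:ℝ) 1) :
    ((fun y => Int.fract ((p:ℝ) * y)) ⁻¹' Ico 0 x) ∩ Ico (0:ℝ) 1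
      = ⋃ k ∈ Finset.range p, Ico ((k:ℝ)/p) (((k:ℝ)+x)/p) := by
  have hp0 : (0:ℝ) < p := by exact_mod_cast Nat.lt_of_lt_of_le Nat.zero_lt_two hp
  obtain ⟨hx0, hx1⟩ := hx
  ext y
  simp only [Set.mem_inter_iff, Set.mem_preimage, Set.mem_Ico, Set.mem_iUnion,
    Finset.mem_range, exists_prop]
  constructor
  · rintro ⟨⟨-, hfx⟩, hy0, hy1⟩
    have hpy0 : 0 ≤ (p:ℝ) * y := by positivity
    have hpy1 : (p:ℝ) * y < p := by nlinarith
    have hk0 : 0 ≤ ⌊(p:ℝ) * y⌋ := Int.floor_nonneg.2 hpy0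
    have hkp : ⌊(p:ℝ) * y⌋ < (p:ℤ) := Int.floor_lt.2 (by exact_mod_cast hpy1)
    have hfl : ((⌊(p:ℝ) * y⌋.toNat : ℝ)) = (⌊(p:ℝ) * y⌋ : ℝ) := by
      exact_mod_cast Int.toNat_of_nonneg hk0
    have hle : ((⌊(p:ℝ) * y⌋ : ℝ)) ≤ (p:ℝ) * y := Int.floor_le _
    have hfr : Int.fract ((p:ℝ) * y) = (p:ℝ) * y - ⌊(p:ℝ) * y⌋ := rfl
    refine ⟨⌊(p:ℝ) * y⌋.toNat, by omega, ?_, ?_⟩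
    · rw [div_le_iff₀ hp0, hfl]; linarith [Int.floor_le ((p:ℝ) * y)]
    · rw [lt_div_iff₀ hp0, hfl]
      nlinarith [Int.fract_nonneg ((p:ℝ) * y)]
  · rintro ⟨k, hkp, hky, hyk⟩
    have hk1 : (k:ℝ) + 1 ≤ p := by exact_mod_cast hkp
    have h1 : (k:ℝ) ≤ (p:ℝ) * y := by
      rw [div_le_iff₀ hp0] at hky; linarith
    have h2 : (p:ℝ) * y < (k:ℝ) + x := by
      rw [lt_div_iff₀ hp0] at hyk; linarith
    have hfl : ⌊(p:ℝ) * y⌋ = (k:ℤ) := by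
      rw [Int.floor_eq_iff]
      constructor <;> push_cast <;> linarith
    have hfr : Int.fract ((p:ℝ) * y) = (p:ℝ) * y - k := by
      rw [Int.fract, hfl]; push_cast; ring
    refine ⟨⟨by rw [hfr]; linarith, by rw [hfr]; linarith⟩, ?_, ?_⟩
    · calc (0:ℝ) ≤ (k:ℝ)/p := by positivity
        _ ≤ y := hky
    · calc y < ((k:ℝ)+x)/p := hyk
        _ ≤ 1 := by rw [div_le_one hp0]; linarith

/-- Two probability measures concentrated on `[0,1)` that agree on `[0,x)` for all
`x ∈ [0,1]` are equal. -/
lemma ext_on_unit (κ₁ κ₂ : Measure ℝ) [IsProbabilityMeasure κ₁] [IsProbabilityMeasure κ₂]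
    (h1 : κ₁ (Ico (0:ℝ) 1)ᶜ = 0) (h2 : κ₂ (Ico (0:ℝ) 1)ᶜ = 0)
    (h : ∀ x ∈ Icc (0:ℝ) 1, κ₁ (Ico 0 x) = κ₂ (Ico 0 x)) : κ₁ = κ₂ := by
  refine MeasureTheory.Measure.ext_of_Ico_finite κ₁ κ₂ (by simp) (fun a b hab => ?_)
  rw [← measure_inter_conull h1, ← measure_inter_conull h2, Set.Ico_inter_Ico]
  set a' := a ⊔ 0 with ha'
  set b' := b ⊓ 1 with hb'
  by_cases hab' : a' < b'
  · have ha'0 : (0:ℝ) ≤ a' := le_sup_right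
    have hb'1 : b' ≤ 1 := inf_le_right
    have key : ∀ κ : Measure ℝ, κ (Ico 0 a') + κ (Ico a' b') = κ (Ico 0 b') := by
      intro κ
      rw [← measure_union (Set.Ico_disjoint_Ico_same) measurableSet_Ico,
        Set.Ico_union_Ico_eq_Ico ha'0 hab'.le]
    have e1 := key κ₁
    have e2 := key κ₂
    have hA := h a' ⟨ha'0, hab'.le.trans hb'1⟩
    have hB := h b' ⟨ha'0.trans hab'.le, hb'1⟩
    have : κ₁ (Ico 0 a') + κ₁ (Ico a' b') = κ₁ (Ico 0 a') + κ₂ (Ico a' b') := by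
      rw [e1, hB, ← e2, hA]
    exact (ENNReal.add_right_inj (measure_ne_top κ₁ _)).1 this
  · rw [Set.Ico_eq_empty hab', measure_empty, measure_empty]

lemma key_measure (p : ℕ) (hp : 2 ≤ p) (μ : Measure ℝ) [IsProbabilityMeasure μ]
    (hsupp : μ (Set.Ico (0:ℝ) 1) = 1) (x : ℝ) (hx : x ∈ Icc (0:ℝ) 1) :
    μ ((fun y => Int.fract ((p:ℝ) * y)) ⁻¹' Ico 0 x)
      = ∑ k ∈ Finset.range p, μ (Ico ((k:ℝ)/p) (((k:ℝ)+x)/p)) := by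
  have hp0 : (0:ℝ) < p := by exact_mod_cast Nat.lt_of_lt_of_le Nat.zero_lt_two hp
  have hnull : μ (Ico (0:ℝ) 1)ᶜ = 0 := (prob_compl_eq_zero_iff measurableSet_Ico).2 hsupp
  rw [← measure_inter_conull hnull, padic_preimage p hp x hx]
  have H : ∀ i j : ℕ, i < j →
      Disjoint (Ico ((i:ℝ)/p) (((i:ℝ)+x)/p)) (Ico ((j:ℝ)/p) (((j:ℝ)+x)/p)) := by
    intro i j hlt
    refine Set.Ico_disjoint_Ico.2 ?_
    have hij : (i:ℝ) + 1 ≤ j := by exact_mod_cast hlt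
    have h1 : ((i:ℝ)+x)/p ≤ (j:ℝ)/p := by
      gcongr
      linarith [hx.2]
    calc min (((i:ℝ)+x)/p) (((j:ℝ)+x)/p) ≤ ((i:ℝ)+x)/p := min_le_left _ _
      _ ≤ (j:ℝ)/p := h1
      _ ≤ max ((i:ℝ)/p) ((j:ℝ)/p) := le_max_right _ _
  refine measure_biUnion_finset ?_ (fun k _ => measurableSet_Ico)
  intro i hi j hj hij
  rcases hij.lt_or_gt with hlt | hlt
  · exact H i j hlt
  · exact (H j i hlt).symm

lemma toReal_Ico (p : ℕ) (hp : 2 ≤ p) (μ : Measure ℝ) [IsProbabilityMeasure μ]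
    (φ : ℝ → ℝ)
    (hφ : ∀ x ∈ Set.Icc (0:ℝ) 1, φ x = (μ (Set.Ico (0:ℝ) x)).toReal)
    (x : ℝ) (hx : x ∈ Icc (0:ℝ) 1) (k : ℕ) (hk : k < p) :
    (μ (Ico ((k:ℝ)/p) (((k:ℝ)+x)/p))).toReal = φ ((x + k)/p) - φ ((k:ℝ)/p) := by
  have hp0 : (0:ℝ) < p := by exact_mod_cast Nat.lt_of_lt_of_le Nat.zero_lt_two hp
  have hkp : (k:ℝ) + 1 ≤ p := by exact_mod_cast hk
  obtain ⟨hx0, hx1⟩ := hx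
  have hm1 : (k:ℝ)/p ∈ Icc (0:ℝ) 1 :=
    ⟨by positivity, by rw [div_le_one hp0]; linarith⟩
  have hm2 : (x + (k:ℝ))/p ∈ Icc (0:ℝ) 1 :=
    ⟨by positivity, by rw [div_le_one hp0]; linarith⟩
  have hcomm : (x + (k:ℝ))/p = ((k:ℝ) + x)/p := by ring
  have h1 : (0:ℝ) ≤ (k:ℝ)/p := by positivity
  have h2 : (k:ℝ)/p ≤ ((k:ℝ)+x)/p := by gcongr; linarith
  have hadd : μ (Ico 0 (((k:ℝ)+x)/p))
      = μ (Ico 0 ((k:ℝ)/p)) + μ (Ico ((k:ℝ)/p) (((k:ℝ)+x)/p)) := by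
    rw [← Set.Ico_union_Ico_eq_Ico h1 h2,
      measure_union Set.Ico_disjoint_Ico_same measurableSet_Ico]
  rw [hφ _ hm2, hφ _ hm1, hcomm, hadd,
    ENNReal.toReal_add (measure_ne_top μ _) (measure_ne_top μ _)]
  ring

/-- μ is invariant under the p-adic transformation iff its
distribution function φ(x) = μ([0,x)) satisfies the functional equation
φ(x) = Σ_{k=0}^{p-1} [φ((x+k)/p) - φ(k/p)] on [0,1]. -/
theorem stmt2 (p : ℕ) (hp : 2 ≤ p)
    (μ : Measure ℝ) [IsProbabilityMeasure μ]
    (hsupp : μ (Set.Ico (0:ℝ) 1) = 1)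
    (φ : ℝ → ℝ)
    (hφ : ∀ x ∈ Set.Icc (0:ℝ) 1, φ x = (μ (Set.Ico (0:ℝ) x)).toReal) :
    (∀ B : Set ℝ, MeasurableSet B →
      μ ((fun y => Int.fract ((p : ℝ) * y)) ⁻¹' B) = μ B)
    ↔ ∀ x ∈ Set.Icc (0:ℝ) 1,
        φ x = ∑ k ∈ Finset.range p, (φ ((x + k) / p) - φ ((k : ℝ) / p)) := by
  set T := fun y : ℝ => Int.fract ((p : ℝ) * y) with hTdef
  have hT : Measurable T := (measurable_id.const_mul ((p:ℝ))).fract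
  have bridge : ∀ x ∈ Icc (0:ℝ) 1, (μ (T ⁻¹' Ico 0 x)).toReal
      = ∑ k ∈ Finset.range p, (φ ((x + k) / p) - φ ((k : ℝ) / p)) := by
    intro x hx
    rw [key_measure p hp μ hsupp x hx, ENNReal.toReal_sum (fun k _ => measure_ne_top μ _)]
    exact Finset.sum_congr rfl fun k hk =>
      toReal_Ico p hp μ φ hφ x hx k (Finset.mem_range.1 hk)
  constructor
  · intro h x hx
    rw [hφ x hx, ← h _ measurableSet_Ico]
    exact bridge x hx
  · intro h
    have hIco : ∀ x ∈ Icc (0:ℝ) 1, μ (T ⁻¹' Ico 0 x) = μ (Ico 0 x) := by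
      intro x hx
      refine (ENNReal.toReal_eq_toReal_iff' (measure_ne_top μ _) (measure_ne_top μ _)).1 ?_
      rw [bridge x hx, ← h x hx, hφ x hx]
    set ν := μ.map T with hν
    haveI : IsProbabilityMeasure ν := Measure.isProbabilityMeasure_map hT.aemeasurable
    have hmap : ∀ s : Set ℝ, MeasurableSet s → ν s = μ (T ⁻¹' s) :=
      fun s hs => Measure.map_apply hT hs
    have hpre : T ⁻¹' (Ico (0:ℝ) 1)ᶜ = ∅ := by
      ext y
      simp [hTdef, Int.fract_nonneg, Int.fract_lt_one]
    have hνnull : ν (Ico (0:ℝ) 1)ᶜ = 0 := by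
      rw [hmap _ measurableSet_Ico.compl, hpre, measure_empty]
    have hμnull : μ (Ico (0:ℝ) 1)ᶜ = 0 := (prob_compl_eq_zero_iff measurableSet_Ico).2 hsupp
    have heq : ν = μ := ext_on_unit ν μ hνnull hμnull
      (fun x hx => by rw [hmap _ measurableSet_Ico]; exact hIco x hx)
    intro B hB
    rw [← hmap B hB, heq]
end

section
/- Let p ≥ 2 be an integer. If φ : [0,1] → [0,1] is non-decreasing, absolutely continuous, with φ(0) = 0 and φ(1) = 1, and T is the operator Tφ(x) = Σ_{k=0}^{p−1}[φ((x+k)/p) − φ(k/p)], then lim_{m→∞} (T^m φ)(x) = x for every x ∈ [0,1]. -/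
/-- The transfer-type operator associated with the p-adic transformation. -/
noncomputable def padicT (p : ℕ) (φ : ℝ → ℝ) : ℝ → ℝ :=
  fun x => ∑ k ∈ Finset.range p, (φ ((x + k) / p) - φ ((k : ℝ) / p))

lemma sum_range_mul_aux {M : Type*} [AddCommMonoid M] (a b : ℕ) (ha : 0 < a) (f : ℕ → M) :
    ∑ k ∈ Finset.range a, ∑ j ∈ Finset.range b, f (k + a * j)
      = ∑ i ∈ Finset.range (a * b), f i := by
  rw [Finset.sum_sigma']
  refine Finset.sum_nbij' (fun q => q.1 + a * q.2) (fun i => ⟨i % a, i / a⟩) ?_ ?_ ?_ ?_ ?_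
  · rintro ⟨k, j⟩ hk
    simp only [Finset.mem_sigma, Finset.mem_range] at hk ⊢
    calc k + a * j < a + a * j := by omega
    _ = a * (j + 1) := by ring
    _ ≤ a * b := Nat.mul_le_mul_left a hk.2
  · intro i hi
    simp only [Finset.mem_range, Finset.mem_sigma] at hi ⊢
    exact ⟨Nat.mod_lt _ ha, Nat.div_lt_of_lt_mul hi⟩
  · rintro ⟨k, j⟩ hk
    simp only [Finset.mem_sigma, Finset.mem_range] at hk
    have h1 : (k + a * j) % a = k := by
      rw [Nat.add_mul_mod_self_left, Nat.mod_eq_of_lt hk.1]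
    have h2 : (k + a * j) / a = j := by
      rw [Nat.add_mul_div_left _ _ ha, Nat.div_eq_of_lt hk.1, Nat.zero_add]
    simp [h1, h2]
  · intro i _; simp [Nat.mod_add_div]
  · intros; rfl

lemma iterate_formula (p : ℕ) (hp : 2 ≤ p) (φ : ℝ → ℝ) (h0 : φ 0 = 0) :
    ∀ (m : ℕ) (x : ℝ), (padicT p)^[m] φ x
      = ∑ j ∈ Finset.range (p ^ m), (φ ((x + j) / (p : ℝ) ^ m) - φ ((j : ℝ) / (p : ℝ) ^ m)) := by
  have hp0 : (p : ℝ) ≠ 0 := by positivity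
  intro m
  induction m with
  | zero => intro x; simp [h0]
  | succ m ih =>
    intro x
    rw [Function.iterate_succ_apply']
    show ∑ k ∈ Finset.range p, ((padicT p)^[m] φ ((x + k) / p) - (padicT p)^[m] φ ((k : ℝ) / p)) = _
    have key : ∀ k ∈ Finset.range p,
        (padicT p)^[m] φ ((x + k) / p) - (padicT p)^[m] φ ((k : ℝ) / p)
        = ∑ j ∈ Finset.range (p ^ m),
            (φ ((x + ((k + p * j : ℕ) : ℝ)) / (p : ℝ) ^ (m + 1))
              - φ (((k + p * j : ℕ) : ℝ) / (p : ℝ) ^ (m + 1))) := by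
      intro k _
      rw [ih, ih, ← Finset.sum_sub_distrib]
      refine Finset.sum_congr rfl fun j _ => ?_
      have e1 : ((x + k) / p + j) / (p : ℝ) ^ m = (x + ((k + p * j : ℕ) : ℝ)) / (p : ℝ) ^ (m + 1) := by
        push_cast; field_simp; ring
      have e2 : ((k : ℝ) / p + j) / (p : ℝ) ^ m = (((k + p * j : ℕ) : ℝ)) / (p : ℝ) ^ (m + 1) := by
        push_cast; field_simp; ring
      rw [e1, e2]; ring
    rw [Finset.sum_congr rfl key, sum_range_mul_aux p (p ^ m) (by omega) (fun i => φ ((x + (i:ℝ)) / (p : ℝ) ^ (m + 1)) - φ ((i : ℝ) / (p : ℝ) ^ (m + 1))), ← pow_succ']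

open MeasureTheory

/-- if φ : [0,1] → [0,1] is non-decreasing, absolutely continuous
(i.e. an indefinite integral of an integrable function), with φ(0)=0, φ(1)=1,
then T^m φ converges pointwise to the identity on [0,1]. -/
theorem stmt5 (p : ℕ) (hp : 2 ≤ p) (φ : ℝ → ℝ)
    (hmono : MonotoneOn φ (Set.Icc 0 1))
    (hrange : ∀ x ∈ Set.Icc (0:ℝ) 1, φ x ∈ Set.Icc (0:ℝ) 1)
    (h0 : φ 0 = 0) (h1 : φ 1 = 1)
    (hac : ∃ g : ℝ → ℝ, MeasureTheory.IntegrableOn g (Set.Icc 0 1) ∧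
      ∀ x ∈ Set.Icc (0:ℝ) 1, φ x = ∫ t in (0:ℝ)..x, g t) :
    ∀ x ∈ Set.Icc (0:ℝ) 1,
      Filter.Tendsto (fun m : ℕ => (padicT p)^[m] φ x) Filter.atTop (nhds x) := by
  obtain ⟨g, hgint, hgrepr⟩ := hac
  intro x hx
  obtain ⟨hx0, hx1⟩ := hx
  set g' : ℝ → ℝ := (Set.Icc (0:ℝ) 1).indicator g with hg'def
  have hg'int : Integrable g' := hgint.integrable_indicator measurableSet_Icc
  have hg'ii : ∀ a b : ℝ, IntervalIntegrable g' volume a b :=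
    fun a b => hg'int.intervalIntegrable
  have hrepr' : ∀ y ∈ Set.Icc (0:ℝ) 1, φ y = ∫ t in (0:ℝ)..y, g' t := by
    intro y hy
    rw [hgrepr y hy]
    refine intervalIntegral.integral_congr fun t ht => ?_
    rw [Set.uIcc_of_le hy.1] at ht
    exact (Set.indicator_of_mem (Set.Icc_subset_Icc le_rfl hy.2 ht) g).symm
  have hg'1 : (∫ t in (0:ℝ)..1, g' t) = 1 := by
    rw [← hrepr' 1 ⟨zero_le_one, le_rfl⟩, h1]
  -- formula for the iterates as sums of integrals
  have formula : ∀ m : ℕ, (padicT p)^[m] φ x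
      = ∑ j ∈ Finset.range (p ^ m),
          ∫ t in ((j:ℝ)/(p:ℝ)^m)..((x + j)/(p:ℝ)^m), g' t := by
    intro m
    rw [iterate_formula p hp φ h0 m x]
    refine Finset.sum_congr rfl fun j hj => ?_
    have hNpos : (0:ℝ) < (p:ℝ)^m := by positivity
    have hj0 : (0:ℝ) ≤ (j:ℝ) := Nat.cast_nonneg j
    have hj' : (j:ℝ) + 1 ≤ (p:ℝ)^m := by
      have := Finset.mem_range.mp hj
      have : (j:ℕ) + 1 ≤ p ^ m := this
      exact_mod_cast this
    have hmem1 : (j:ℝ)/(p:ℝ)^m ∈ Set.Icc (0:ℝ) 1 :=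
      ⟨by positivity, by rw [div_le_one hNpos]; linarith⟩
    have hmem2 : (x + j)/(p:ℝ)^m ∈ Set.Icc (0:ℝ) 1 :=
      ⟨div_nonneg (by linarith) hNpos.le, by rw [div_le_one hNpos]; linarith⟩
    rw [hrepr' _ hmem2, hrepr' _ hmem1]
    exact intervalIntegral.integral_interval_sub_left (hg'ii _ _) (hg'ii _ _)
  rw [Metric.tendsto_atTop]
  intro ε hε
  obtain ⟨h, hcs, hl1, hcont, hhint⟩ :=
    hg'int.exists_hasCompactSupport_integral_sub_le (by positivity : (0:ℝ) < ε/4)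
  have hhii : ∀ a b : ℝ, IntervalIntegrable h volume a b :=
    fun a b => hhint.intervalIntegrable
  have huc := hcs.uniformContinuous_of_continuous hcont
  rw [Metric.uniformContinuous_iff] at huc
  obtain ⟨δ, hδ, hδ'⟩ := huc (ε/8) (by positivity)
  have hplim : Filter.Tendsto (fun m : ℕ => ((p:ℝ))^m) Filter.atTop Filter.atTop :=
    tendsto_pow_atTop_atTop_of_one_lt (by exact_mod_cast hp.trans_lt' one_lt_two)
  obtain ⟨M, hM⟩ := Filter.eventually_atTop.mp (hplim.eventually_gt_atTop (1/δ))
  refine ⟨M, fun m hm => ?_⟩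
  -- setup for fixed m
  set N : ℕ := p ^ m with hNdef
  set Nr : ℝ := ((p:ℝ))^m with hNrdef
  have hNcast : ((N:ℕ):ℝ) = Nr := by push_cast [hNdef, hNrdef]; ring
  have hNpos : (0:ℝ) < Nr := by positivity
  have hN1 : (1:ℝ) ≤ Nr := one_le_pow₀ (by exact_mod_cast hp.trans' one_le_two)
  have hδN : 1/Nr < δ := by
    have := hM m hm
    rw [div_lt_iff₀ hδ] at this
    rw [div_lt_iff₀ hNpos]
    nlinarith
  -- the L¹ distance between g' and h, as a real function
  set u : ℝ → ℝ := fun t => |g' t - h t| with hudef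
  have hu_int : Integrable u := (hg'int.sub hhint).abs
  have hu_ii : ∀ a b : ℝ, IntervalIntegrable u volume a b := fun a b => hu_int.intervalIntegrable
  have hu_nonneg : ∀ t, 0 ≤ u t := fun t => abs_nonneg _
  have hu_total : (∫ t in (0:ℝ)..1, u t) ≤ ε/4 := by
    calc (∫ t in (0:ℝ)..1, u t) ≤ ∫ t, u t := by
          rw [intervalIntegral.integral_of_le zero_le_one]
          exact setIntegral_le_integral hu_int (Filter.Eventually.of_forall hu_nonneg)
    _ = ∫ t, ‖g' t - h t‖ := by simp [hudef, Real.norm_eq_abs]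
    _ ≤ ε/4 := hl1
  -- interval endpoints
  have hab : ∀ j : ℕ, (j:ℝ)/Nr ≤ (x + j)/Nr := by
    intro j; exact (div_le_div_iff_of_pos_right hNpos).mpr (by linarith)
  have hbd : ∀ j : ℕ, (x + j)/Nr ≤ ((j:ℝ)+1)/Nr := by
    intro j; exact (div_le_div_iff_of_pos_right hNpos).mpr (by linarith)
  -- telescoping sums
  have htel : ∀ f : ℝ → ℝ, (∀ a b : ℝ, IntervalIntegrable f volume a b) →
      ∑ j ∈ Finset.range N, (∫ t in ((j:ℝ)/Nr)..(((j:ℝ)+1)/Nr), f t) = ∫ t in (0:ℝ)..1, f t := by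
    intro f hf
    have := intervalIntegral.sum_integral_adjacent_intervals
      (f := f) (μ := volume) (a := fun k : ℕ => (k:ℝ)/Nr) (n := N) (fun k _ => hf _ _)
    simp only [Nat.cast_zero, zero_div] at this
    rw [hNcast, div_self hNpos.ne'] at this
    rw [← this]
    refine Finset.sum_congr rfl fun j _ => ?_
    congr 1
    push_cast
    ring
  -- Bound 1 : |S1 - S2| ≤ ε/4
  have bound1 : |(∑ j ∈ Finset.range N, ∫ t in ((j:ℝ)/Nr)..((x + j)/Nr), g' t)
      - ∑ j ∈ Finset.range N, ∫ t in ((j:ℝ)/Nr)..((x + j)/Nr), h t| ≤ ε/4 := by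
    rw [← Finset.sum_sub_distrib]
    refine (Finset.abs_sum_le_sum_abs _ _).trans ?_
    have step : ∀ j ∈ Finset.range N,
        |(∫ t in ((j:ℝ)/Nr)..((x + j)/Nr), g' t) - ∫ t in ((j:ℝ)/Nr)..((x + j)/Nr), h t|
          ≤ ∫ t in ((j:ℝ)/Nr)..(((j:ℝ)+1)/Nr), u t := by
      intro j _
      rw [← intervalIntegral.integral_sub (hg'ii _ _) (hhii _ _)]
      refine (intervalIntegral.abs_integral_le_integral_abs (hab j)).trans ?_
      exact intervalIntegral.integral_mono_interval le_rfl (hab j) (hbd j)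
        (Filter.Eventually.of_forall hu_nonneg) (hu_ii _ _)
    refine (Finset.sum_le_sum step).trans ?_
    rw [htel u hu_ii]
    exact hu_total
  -- Bound 2 : |x * ∫₀¹ h - x| ≤ ε/4
  have bound2 : |x * (∫ t in (0:ℝ)..1, h t) - x| ≤ ε/4 := by
    have : |(∫ t in (0:ℝ)..1, h t) - (∫ t in (0:ℝ)..1, g' t)| ≤ ε/4 := by
      rw [← intervalIntegral.integral_sub (hhii _ _) (hg'ii _ _)]
      refine (intervalIntegral.abs_integral_le_integral_abs zero_le_one).trans ?_
      calc (∫ t in (0:ℝ)..1, |h t - g' t|) = ∫ t in (0:ℝ)..1, u t := by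
            refine intervalIntegral.integral_congr fun t _ => ?_
            simp [hudef, abs_sub_comm]
      _ ≤ ε/4 := hu_total
    rw [hg'1] at this
    calc |x * (∫ t in (0:ℝ)..1, h t) - x| = |x| * |(∫ t in (0:ℝ)..1, h t) - 1| := by
          rw [← abs_mul]; ring_nf
    _ ≤ 1 * (ε/4) := by
        refine mul_le_mul ?_ this (abs_nonneg _) zero_le_one
        rw [abs_of_nonneg hx0]; exact hx1
    _ = ε/4 := one_mul _
  -- Bound 3 : |S2 - x * ∫₀¹ h| ≤ ε/4
  have bound3 : |(∑ j ∈ Finset.range N, ∫ t in ((j:ℝ)/Nr)..((x + j)/Nr), h t)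
      - x * (∫ t in (0:ℝ)..1, h t)| ≤ ε/4 := by
    rw [← htel h hhii, Finset.mul_sum, ← Finset.sum_sub_distrib]
    refine (Finset.abs_sum_le_sum_abs _ _).trans ?_
    have step : ∀ j ∈ Finset.range N,
        |(∫ t in ((j:ℝ)/Nr)..((x + j)/Nr), h t)
          - x * ∫ t in ((j:ℝ)/Nr)..(((j:ℝ)+1)/Nr), h t| ≤ ε/(4*Nr) := by
      intro j _
      set a := (j:ℝ)/Nr with ha
      set c := h a with hc
      have hclose : ∀ b : ℝ, a ≤ b → b ≤ ((j:ℝ)+1)/Nr →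
          ∀ t ∈ Set.uIoc a b, ‖h t - c‖ ≤ ε/8 := by
        intro b h1b h2b t ht
        rw [Set.uIoc_of_le h1b] at ht
        have h3 : ((j:ℝ)+1)/Nr - a = 1/Nr := by rw [ha]; field_simp; ring
        have : dist t a < δ := by
          rw [Real.dist_eq, abs_of_nonneg (by linarith [ht.1.le] : (0:ℝ) ≤ t - a)]
          have : t ≤ ((j:ℝ)+1)/Nr := le_trans ht.2 h2b
          linarith [hδN]
        exact (le_of_lt (hδ' this))
      have key : ∀ b : ℝ, a ≤ b → b ≤ ((j:ℝ)+1)/Nr →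
          |(∫ t in a..b, h t) - (b - a) * c| ≤ (ε/8) * (1/Nr) := by
        intro b h1b h2b
        have e : (∫ t in a..b, h t) - (b - a) * c = ∫ t in a..b, (h t - c) := by
          rw [intervalIntegral.integral_sub (hhii _ _) intervalIntegrable_const,
            intervalIntegral.integral_const, smul_eq_mul]
        rw [e, ← Real.norm_eq_abs]
        refine (intervalIntegral.norm_integral_le_of_norm_le_const (hclose b h1b h2b)).trans ?_
        have h3 : ((j:ℝ)+1)/Nr - a = 1/Nr := by rw [ha]; field_simp; ring
        have : |b - a| ≤ 1/Nr := by
          rw [abs_of_nonneg (by linarith)]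
          linarith
        have h8 : (0:ℝ) ≤ ε/8 := by positivity
        exact mul_le_mul_of_nonneg_left this h8
      have k1 := key ((x + j)/Nr) (hab j) (hbd j)
      have k2 := key (((j:ℝ)+1)/Nr) (le_trans (hab j) (hbd j)) le_rfl
      have e1 : (x + j)/Nr - a = x/Nr := by rw [ha]; field_simp; ring
      have e2 : ((j:ℝ)+1)/Nr - a = 1/Nr := by rw [ha]; field_simp; ring
      rw [e1] at k1
      rw [e2] at k2
      have expand : (∫ t in a..((x + j)/Nr), h t) - x * ∫ t in a..(((j:ℝ)+1)/Nr), h t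
          = ((∫ t in a..((x + j)/Nr), h t) - (x/Nr) * c)
            - x * ((∫ t in a..(((j:ℝ)+1)/Nr), h t) - (1/Nr) * c) := by ring
      rw [expand]
      refine (abs_sub _ _).trans ?_
      have k2' : |x * ((∫ t in a..(((j:ℝ)+1)/Nr), h t) - (1/Nr) * c)| ≤ (ε/8) * (1/Nr) := by
        rw [abs_mul, abs_of_nonneg hx0]
        calc x * |(∫ t in a..(((j:ℝ)+1)/Nr), h t) - (1/Nr) * c|
            ≤ 1 * ((ε/8) * (1/Nr)) := mul_le_mul hx1 k2 (abs_nonneg _) zero_le_one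
        _ = (ε/8) * (1/Nr) := one_mul _
      calc |(∫ t in a..((x + j)/Nr), h t) - (x/Nr) * c|
            + |x * ((∫ t in a..(((j:ℝ)+1)/Nr), h t) - (1/Nr) * c)|
          ≤ (ε/8) * (1/Nr) + (ε/8) * (1/Nr) := add_le_add k1 k2'
      _ = ε/(4*Nr) := by field_simp; ring
    refine (Finset.sum_le_sum step).trans ?_
    rw [Finset.sum_const, Finset.card_range, nsmul_eq_mul, hNcast]
    refine le_of_eq ?_
    field_simp
  -- conclusion
  rw [Real.dist_eq, formula m]
  have final : |(∑ j ∈ Finset.range N, ∫ t in ((j:ℝ)/Nr)..((x + j)/Nr), g' t) - x| ≤ 3*ε/4 := by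
    calc |(∑ j ∈ Finset.range N, ∫ t in ((j:ℝ)/Nr)..((x + j)/Nr), g' t) - x|
        ≤ |(∑ j ∈ Finset.range N, ∫ t in ((j:ℝ)/Nr)..((x + j)/Nr), g' t)
            - ∑ j ∈ Finset.range N, ∫ t in ((j:ℝ)/Nr)..((x + j)/Nr), h t|
          + |(∑ j ∈ Finset.range N, ∫ t in ((j:ℝ)/Nr)..((x + j)/Nr), h t)
            - x * (∫ t in (0:ℝ)..1, h t)|
          + |x * (∫ t in (0:ℝ)..1, h t) - x| := by
          refine (abs_sub_le _ (∑ j ∈ Finset.range N,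
            ∫ t in ((j:ℝ)/Nr)..((x + j)/Nr), h t) _).trans ?_
          have := abs_sub_le (∑ j ∈ Finset.range N,
            ∫ t in ((j:ℝ)/Nr)..((x + j)/Nr), h t) (x * (∫ t in (0:ℝ)..1, h t)) x
          linarith
    _ ≤ ε/4 + ε/4 + ε/4 := by
        have := add_le_add (add_le_add bound1 bound3) bound2
        linarith [bound1, bound2, bound3]
    _ = 3*ε/4 := by ring
  calc |(∑ j ∈ Finset.range N, ∫ t in ((j:ℝ)/Nr)..((x + j)/Nr), g' t) - x| ≤ 3*ε/4 := final
  _ < ε := by linarith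
end

section
/- Let p ≥ 2 and let D = ⋃_{m∈ℕ} { i/(p^m − 1) : i ∈ {0, …, p^m − 2} }. If φ : [0,1] → [0,1] is non-decreasing, left-continuous, φ(0) = 0, φ(1) = 1, and satisfies φ(x) = Σ_{k=0}^{p−1}[φ((x+k)/p) − φ(k/p)] for all x ∈ [0,1], then φ is continuous at every point of [0,1] \ D. -/
/-- The set D = ⋃_{m≥1} { i/(p^m - 1) : 0 ≤ i ≤ p^m - 2 }. -/
def padicD (p : ℕ) : Set ℝ :=
  {x | ∃ m : ℕ, 1 ≤ m ∧ ∃ i : ℕ, i ≤ p ^ m - 2 ∧ x = (i : ℝ) / ((p : ℝ) ^ m - 1)}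

open Finset Set

/-- Sum of increments of a monotone function over strictly disjoint intervals. -/
lemma sumIncr (φ : ℝ → ℝ) (hmono : MonotoneOn φ (Set.Icc 0 1)) :
    ∀ (s : Finset (ℝ × ℝ)) (c : ℝ), 0 ≤ c → c ≤ 1 →
    (∀ q ∈ s, 0 ≤ q.1 ∧ q.1 ≤ q.2 ∧ q.2 ≤ c) →
    (∀ q ∈ s, ∀ q' ∈ s, q ≠ q' → q.2 < q'.1 ∨ q'.2 < q.1) →
    ∑ q ∈ s, (φ q.2 - φ q.1) ≤ φ c - φ 0 := by
  intro s
  induction s using Finset.strongInduction with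
  | _ s ih =>
    intro c hc0 hc1 hb hd
    rcases s.eq_empty_or_nonempty with rfl | hne
    · simp only [Finset.sum_empty, sub_nonneg]
      exact hmono ⟨le_refl 0, zero_le_one⟩ ⟨hc0, hc1⟩ hc0
    · obtain ⟨q, hq, hmax⟩ := Finset.exists_max_image s Prod.fst hne
      have hqb := hb q hq
      have key : ∀ q' ∈ s.erase q, 0 ≤ q'.1 ∧ q'.1 ≤ q'.2 ∧ q'.2 ≤ q.1 := by
        intro q' hq'
        have hq's : q' ∈ s := Finset.mem_of_mem_erase hq'
        have hne' : q' ≠ q := Finset.ne_of_mem_erase hq'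
        have := hd q' hq's q hq (by exact hne')
        rcases this with h | h
        · exact ⟨(hb q' hq's).1, (hb q' hq's).2.1, le_of_lt h⟩
        · exfalso
          have h1' : q.1 ≤ q.2 := hqb.2.1
          have h2' : q'.1 ≤ q'.2 := (hb q' hq's).2.1
          have := hmax q' hq's
          linarith
      have ihs : ∑ q' ∈ s.erase q, (φ q'.2 - φ q'.1) ≤ φ q.1 - φ 0 := by
        refine ih (s.erase q) (Finset.erase_ssubset hq) q.1 hqb.1 (le_trans hqb.2.1 (le_trans hqb.2.2 hc1)) key ?_
        intro a ha b hbb hab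
        exact hd a (Finset.mem_of_mem_erase ha) b (Finset.mem_of_mem_erase hbb) hab
      have : ∑ q' ∈ s, (φ q'.2 - φ q'.1) = ∑ q' ∈ s.erase q, (φ q'.2 - φ q'.1) + (φ q.2 - φ q.1) := by
        rw [Finset.sum_erase_add s _ hq]
      rw [this]
      have hlast : φ q.2 ≤ φ c :=
        hmono ⟨le_trans hqb.1 hqb.2.1, le_trans hqb.2.2 hc1⟩ ⟨hc0, hc1⟩ hqb.2.2
      linarith

lemma sum_range_mul_split (g : ℕ → ℝ) (p n : ℕ) (hp : 0 < p) :
    ∑ j ∈ Finset.range (p * n), g j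
      = ∑ k ∈ Finset.range p, ∑ r ∈ Finset.range n, g (k + r * p) := by
  rw [← Finset.sum_product']
  refine Finset.sum_nbij' (fun j => (j % p, j / p)) (fun x => x.1 + x.2 * p) ?_ ?_ ?_ ?_ ?_
  · intro j hj
    simp only [Finset.mem_range] at hj
    simp only [Finset.mem_product, Finset.mem_range]
    exact ⟨Nat.mod_lt _ hp, Nat.div_lt_of_lt_mul (by omega)⟩
  · intro x hx
    simp only [Finset.mem_product, Finset.mem_range] at hx
    simp only [Finset.mem_range]
    have h1 : x.1 + 1 ≤ p := hx.1
    have h2 : x.2 + 1 ≤ n := hx.2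
    nlinarith
  · intro j hj
    simp only
    exact Nat.mod_add_div' j p
  · intro x hx
    simp only [Finset.mem_product, Finset.mem_range] at hx
    have h1 := hx.1
    ext
    · simp only
      rw [Nat.add_mul_mod_self_right, Nat.mod_eq_of_lt h1]
    · simp only
      rw [Nat.add_mul_div_right _ _ hp, Nat.div_eq_of_lt h1, Nat.zero_add]
  · intro j hj
    simp only
    congr 1
    exact (Nat.mod_add_div' j p).symm

lemma iterFE (p : ℕ) (hp : 2 ≤ p) (φ : ℝ → ℝ)
    (hFE : ∀ x ∈ Set.Icc (0:ℝ) 1, φ x = ∑ k ∈ Finset.range p, (φ ((x + k) / p) - φ ((k:ℝ) / p))) :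
    ∀ m : ℕ, ∀ u ∈ Set.Icc (0:ℝ) 1, ∀ v ∈ Set.Icc (0:ℝ) 1,
      φ v - φ u = ∑ r ∈ Finset.range (p ^ m),
        (φ ((v + r) / (p:ℝ) ^ m) - φ ((u + r) / (p:ℝ) ^ m)) := by
  have hp0 : (0:ℝ) < p := by positivity
  have hp1 : (1:ℝ) ≤ p := by exact_mod_cast Nat.one_le_of_lt hp
  have step : ∀ u ∈ Set.Icc (0:ℝ) 1, ∀ v ∈ Set.Icc (0:ℝ) 1,
      φ v - φ u = ∑ k ∈ Finset.range p, (φ ((v + k) / p) - φ ((u + k) / p)) := by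
    intro u hu v hv
    rw [hFE v hv, hFE u hu, ← Finset.sum_sub_distrib]
    congr 1; ext k; ring
  have hmem : ∀ w ∈ Set.Icc (0:ℝ) 1, ∀ k ∈ Finset.range p, (w + k) / p ∈ Set.Icc (0:ℝ) 1 := by
    intro w hw k hk
    simp only [Finset.mem_range] at hk
    have hk' : (k:ℝ) ≤ (p:ℝ) - 1 := by
      have : (k:ℝ) + 1 ≤ p := by exact_mod_cast hk
      linarith
    have hw1 := hw.1
    have hw2 := hw.2
    constructor
    · positivity
    · rw [div_le_one hp0]
      linarith
  intro m
  induction m with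
  | zero =>
    intro u hu v hv
    simp
  | succ m ih =>
    intro u hu v hv
    rw [step u hu v hv]
    have : ∀ k ∈ Finset.range p,
        φ ((v + k) / p) - φ ((u + k) / p)
          = ∑ r ∈ Finset.range (p ^ m),
            (φ ((v + (k + r * p : ℕ)) / (p:ℝ) ^ (m+1)) - φ ((u + (k + r * p : ℕ)) / (p:ℝ) ^ (m+1))) := by
      intro k hk
      rw [ih ((u+k)/p) (hmem u hu k hk) ((v+k)/p) (hmem v hv k hk)]
      congr 1; ext r
      have h1 : ((v + k) / (p:ℝ) + r) / (p:ℝ) ^ m = (v + (k + r * p : ℕ)) / (p:ℝ) ^ (m+1) := by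
        push_cast
        rw [pow_succ]
        field_simp
        ring
      have h2 : ((u + k) / (p:ℝ) + r) / (p:ℝ) ^ m = (u + (k + r * p : ℕ)) / (p:ℝ) ^ (m+1) := by
        push_cast
        rw [pow_succ]
        field_simp
        ring
      rw [h1, h2]
    rw [Finset.sum_congr rfl this]
    rw [← sum_range_mul_split (fun j => φ ((v + j) / (p:ℝ) ^ (m+1)) - φ ((u + j) / (p:ℝ) ^ (m+1))) p (p^m) (by omega)]
    congr 1
    rw [pow_succ, mul_comm]

lemma distinct_aux (p : ℕ) (hp : 2 ≤ p) (x : ℝ) (hx0 : 0 ≤ x) (hx1 : x < 1)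
    (hxD : x ∉ padicD p) (m n r s : ℕ) (hmn : m < n)
    (heq : (x + r) / (p:ℝ) ^ m = (x + s) / (p:ℝ) ^ n) : False := by
  have hp0 : (0:ℝ) < p := by positivity
  set k := n - m with hk
  have hk1 : 1 ≤ k := by omega
  have hnmk : n = m + k := by omega
  have hPk : (1:ℝ) < (p:ℝ) ^ k := by
    have : (1:ℝ) < (p:ℝ) := by exact_mod_cast hp
    exact one_lt_pow₀ this (by omega)
  have hpm : (p:ℝ) ^ m ≠ 0 := by positivity
  have hpn : (p:ℝ) ^ n ≠ 0 := by positivity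
  have heq1 : (x + r) * (p:ℝ) ^ n = (x + s) * (p:ℝ) ^ m := by
    rw [div_eq_div_iff hpm hpn] at heq
    linarith [heq]
  have heq2 : (x + r) * (p:ℝ) ^ k = x + s := by
    have hsplit : (p:ℝ) ^ n = (p:ℝ) ^ m * (p:ℝ) ^ k := by
      rw [hnmk, pow_add]
    rw [hsplit] at heq1
    have := mul_right_cancel₀ hpm (by linarith [heq1] : (x + r) * (p:ℝ) ^ k * (p:ℝ) ^ m = (x + s) * (p:ℝ) ^ m)
    exact this
  have hx' : x * ((p:ℝ) ^ k - 1) = (s:ℝ) - (p:ℝ) ^ k * r := by linear_combination heq2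
  have hiR : ((((s:ℤ) - (p:ℤ) ^ k * r) : ℤ) : ℝ) = (s:ℝ) - (p:ℝ) ^ k * r := by
    push_cast; ring
  set i : ℤ := (s:ℤ) - (p:ℤ) ^ k * r with hi
  have hi0 : 0 ≤ i := by
    have hnn : (0:ℝ) ≤ (i:ℝ) := by
      rw [hiR, ← hx']
      have : (0:ℝ) ≤ (p:ℝ) ^ k - 1 := by linarith
      exact mul_nonneg hx0 this
    exact_mod_cast hnn
  have hiUB : (i:ℤ) ≤ (p:ℤ) ^ k - 2 := by
    have : (i:ℝ) < (p:ℝ) ^ k - 1 := by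
      rw [hiR, ← hx']
      nlinarith
    have : (i:ℤ) < (p:ℤ) ^ k - 1 := by exact_mod_cast this
    omega
  apply hxD
  refine ⟨k, hk1, i.toNat, ?_, ?_⟩
  · have hcast : ((p ^ k : ℕ) : ℤ) = (p:ℤ) ^ k := by push_cast; ring
    have h2 : 2 ≤ p ^ k := le_trans hp (Nat.le_self_pow (by omega) p)
    have htn : (i.toNat : ℤ) = i := Int.toNat_of_nonneg hi0
    omega
  · have htnR : ((i.toNat : ℕ) : ℝ) = (i:ℝ) := by
      exact_mod_cast congrArg (Int.cast : ℤ → ℝ) (Int.toNat_of_nonneg hi0)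
    rw [htnR, hiR, eq_div_iff (by linarith : (p:ℝ) ^ k - 1 ≠ 0)]
    linarith [hx']

/-- every non-decreasing left-continuous solution φ of the
functional equation with φ(0)=0, φ(1)=1 is continuous at every point of [0,1] \ D. -/
theorem stmt6 (p : ℕ) (hp : 2 ≤ p) (φ : ℝ → ℝ)
    (hmono : MonotoneOn φ (Set.Icc 0 1))
    (hrange : ∀ x ∈ Set.Icc (0:ℝ) 1, φ x ∈ Set.Icc (0:ℝ) 1)
    (h0 : φ 0 = 0) (h1 : φ 1 = 1)
    (hlc : ∀ x ∈ Set.Icc (0:ℝ) 1, ContinuousWithinAt φ (Set.Iic x) x)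
    (hFE : ∀ x ∈ Set.Icc (0:ℝ) 1,
      φ x = ∑ k ∈ Finset.range p, (φ ((x + k) / p) - φ ((k : ℝ) / p))) :
    ∀ x ∈ Set.Icc (0:ℝ) 1, x ∉ padicD p → ContinuousWithinAt φ (Set.Icc 0 1) x := by
  intro x hx hxD
  have hx0 := hx.1
  have hx1 := hx.2
  by_cases hxe : x = 1
  · subst hxe
    exact (hlc 1 hx).mono (fun y hy => hy.2)
  have hxlt : x < 1 := lt_of_le_of_ne hx1 hxe
  have hp0 : (0:ℝ) < p := by positivity
  -- KEY step: points arbitrarily close to x from the right with small increment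
  have KEY : ∀ ε > 0, ∃ y, x < y ∧ y ≤ 1 ∧ φ y - φ x < ε := by
    intro ε hε
    by_contra hcon
    push_neg at hcon
    obtain ⟨M, hM⟩ := exists_nat_gt (1/ε)
    have hM1 : 1 < (M:ℝ) * ε := (div_lt_iff₀ hε).mp hM
    -- index set
    set A : Finset ((_ : ℕ) × ℕ) :=
      (Finset.Icc 1 M).sigma (fun m => Finset.range (p ^ m)) with hA
    have memA : ∀ a : (_ : ℕ) × ℕ, a ∈ A ↔ (1 ≤ a.1 ∧ a.1 ≤ M) ∧ a.2 < p ^ a.1 := by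
      intro a
      simp [hA, Finset.mem_sigma, Finset.mem_Icc, Finset.mem_range]
    set eL : ((_ : ℕ) × ℕ) → ℝ := fun a => (x + a.2) / (p:ℝ) ^ a.1 with heL
    have hinj : ∀ a ∈ A, ∀ b ∈ A, eL a = eL b → a = b := by
      intro a ha b hb hab
      obtain ⟨⟨ha1, _⟩, ha2⟩ := (memA a).mp ha
      obtain ⟨⟨hb1, _⟩, hb2⟩ := (memA b).mp hb
      rcases lt_trichotomy a.1 b.1 with h' | h' | h'
      · exact absurd hab (fun hh =>
          distinct_aux p hp x hx0 hxlt hxD a.1 b.1 a.2 b.2 h' hh)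
      · have hrs : a.2 = b.2 := by
          have hpm : (p:ℝ) ^ a.1 ≠ 0 := by positivity
          rw [heL] at hab
          simp only at hab
          rw [h'] at hab
          field_simp at hab
          exact_mod_cast add_left_cancel hab
        have : a.2 = b.2 := hrs
        obtain ⟨a1, a2⟩ := a
        obtain ⟨b1, b2⟩ := b
        simp only at h' this
        subst h'; subst this; rfl
      · exact absurd hab (fun hh =>
          distinct_aux p hp x hx0 hxlt hxD b.1 a.1 b.2 a.2 h' hh.symm)
    set P : Finset ℝ := A.image eL with hP
    set T : Finset ℝ :=
      insert (1:ℝ) (((P ×ˢ P).filter (fun qq => qq.1 < qq.2)).image (fun qq => qq.2 - qq.1)) with hT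
    have hTne : T.Nonempty := ⟨1, Finset.mem_insert_self _ _⟩
    set g : ℝ := T.min' hTne with hg
    have hTpos : ∀ t ∈ T, 0 < t := by
      intro t ht
      rw [hT, Finset.mem_insert] at ht
      rcases ht with rfl | ht
      · norm_num
      · obtain ⟨qq, hqq, rfl⟩ := Finset.mem_image.mp ht
        have := (Finset.mem_filter.mp hqq).2
        linarith
    have hg0 : 0 < g := hTpos _ (T.min'_mem hTne)
    have hgle : ∀ a ∈ P, ∀ b ∈ P, a < b → g ≤ b - a := by
      intro a ha b hb hab
      apply Finset.min'_le
      rw [hT]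
      apply Finset.mem_insert_of_mem
      exact Finset.mem_image.mpr ⟨(a, b), Finset.mem_filter.mpr ⟨Finset.mem_product.mpr ⟨ha, hb⟩, hab⟩, rfl⟩
    -- choose y
    have hd0 : 0 < min g (1 - x) := lt_min hg0 (by linarith)
    set y : ℝ := x + min g (1 - x) / 2 with hy
    have hxy : x < y := by rw [hy]; linarith
    have hy1 : y ≤ 1 := by
      have : min g (1 - x) ≤ 1 - x := min_le_right _ _
      rw [hy]; linarith
    have hyx : y - x < g := by
      have : min g (1 - x) ≤ g := min_le_left _ _
      rw [hy]; linarith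
    have hymem : y ∈ Set.Icc (0:ℝ) 1 := ⟨by linarith, hy1⟩
    have hεy : ε ≤ φ y - φ x := hcon y hxy hy1
    -- the interval family
    set e : ((_ : ℕ) × ℕ) → ℝ × ℝ :=
      fun a => ((x + a.2) / (p:ℝ) ^ a.1, (y + a.2) / (p:ℝ) ^ a.1) with he
    set s : Finset (ℝ × ℝ) := A.image e with hs
    have heinj : ∀ a ∈ A, ∀ b ∈ A, e a = e b → a = b := by
      intro a ha b hb hab
      apply hinj a ha b hb
      rw [heL]
      exact congrArg Prod.fst hab
    -- bounds for elements of s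
    have hbound : ∀ q ∈ s, 0 ≤ q.1 ∧ q.1 ≤ q.2 ∧ q.2 ≤ 1 := by
      intro q hq
      obtain ⟨a, ha, rfl⟩ := Finset.mem_image.mp hq
      obtain ⟨⟨ha1, _⟩, ha2⟩ := (memA a).mp ha
      have hpm : (0:ℝ) < (p:ℝ) ^ a.1 := by positivity
      refine ⟨by positivity, ?_, ?_⟩
      · exact div_le_div_of_nonneg_right (by linarith) hpm.le
      · rw [div_le_one hpm]
        have : (a.2 : ℝ) ≤ (p:ℝ) ^ a.1 - 1 := by
          have : (a.2 : ℝ) + 1 ≤ ((p ^ a.1 : ℕ) : ℝ) := by exact_mod_cast ha2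
          have hcast : ((p ^ a.1 : ℕ) : ℝ) = (p:ℝ) ^ a.1 := by push_cast; ring
          linarith [hcast ▸ this]
        linarith
    -- strict disjointness
    have hdisj : ∀ q ∈ s, ∀ q' ∈ s, q ≠ q' → q.2 < q'.1 ∨ q'.2 < q.1 := by
      intro q hq q' hq' hne
      obtain ⟨a, ha, rfl⟩ := Finset.mem_image.mp hq
      obtain ⟨b, hb, rfl⟩ := Finset.mem_image.mp hq'
      have hLne : eL a ≠ eL b := by
        intro hh
        exact hne (congrArg e (hinj a ha b hb hh))
      have haP : eL a ∈ P := Finset.mem_image_of_mem _ ha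
      have hbP : eL b ∈ P := Finset.mem_image_of_mem _ hb
      have hstep : ∀ c ∈ A, (e c).2 = eL c + (y - x) / (p:ℝ) ^ c.1 := by
        intro c hc
        rw [he, heL]
        simp only
        ring
      have hsmall : ∀ c : ((_ : ℕ) × ℕ), (y - x) / (p:ℝ) ^ c.1 ≤ y - x := by
        intro c
        have h1 : (1:ℝ) ≤ (p:ℝ) ^ c.1 := by
          apply one_le_pow₀
          exact_mod_cast Nat.one_le_of_lt hp
        exact div_le_self (by linarith) h1
      rcases lt_or_gt_of_ne hLne with h' | h'
      · left
        have hga := hgle (eL a) haP (eL b) hbP h'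
        have h2 := hsmall a
        rw [hstep a ha]
        have hfst : (e b).1 = eL b := rfl
        rw [hfst]
        calc eL a + (y - x) / (p:ℝ) ^ a.1 ≤ eL a + (y - x) := by linarith [hsmall a]
          _ < eL a + g := by linarith [hyx]
          _ ≤ eL b := by linarith [hga]
      · right
        have hga := hgle (eL b) hbP (eL a) haP h'
        have h2 := hsmall b
        rw [hstep b hb]
        have hfst : (e a).1 = eL a := rfl
        rw [hfst]
        calc eL b + (y - x) / (p:ℝ) ^ b.1 ≤ eL b + (y - x) := by linarith [hsmall b]
          _ < eL b + g := by linarith [hyx]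
          _ ≤ eL a := by linarith [hga]
    -- total increment bound
    have hsum_le : ∑ q ∈ s, (φ q.2 - φ q.1) ≤ φ 1 - φ 0 :=
      sumIncr φ hmono s 1 zero_le_one le_rfl hbound hdisj
    -- compute the sum
    have hsum_eq : ∑ q ∈ s, (φ q.2 - φ q.1) = (M:ℝ) * (φ y - φ x) := by
      rw [hs, Finset.sum_image heinj]
      rw [hA, Finset.sum_sigma]
      have : ∀ m ∈ Finset.Icc 1 M,
          ∑ r ∈ Finset.range (p ^ m),
            (φ (e ⟨m, r⟩).2 - φ (e ⟨m, r⟩).1) = φ y - φ x := by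
        intro m _
        have := iterFE p hp φ hFE m x hx y hymem
        rw [he]
        simp only
        exact this.symm
      rw [Finset.sum_congr rfl this, Finset.sum_const, Nat.card_Icc]
      simp [nsmul_eq_mul]
    have h01 : φ 1 - φ 0 = 1 := by rw [h0, h1]; ring
    have hMε : (M:ℝ) * ε ≤ (M:ℝ) * (φ y - φ x) :=
      mul_le_mul_of_nonneg_left hεy (Nat.cast_nonneg M)
    rw [hsum_eq, h01] at hsum_le
    linarith
  -- conclude continuity
  have hIoc : ContinuousWithinAt φ (Set.Ioc x 1) x := by
    rw [Metric.continuousWithinAt_iff]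
    intro ε hε
    obtain ⟨y, hxy, hy1, hfy⟩ := KEY ε hε
    refine ⟨y - x, by linarith, ?_⟩
    intro z hz hdz
    have hz1 : z ∈ Set.Icc (0:ℝ) 1 := ⟨le_trans hx0 hz.1.le, hz.2⟩
    have hzy : z ≤ y := by
      rw [Real.dist_eq] at hdz
      have := abs_lt.mp hdz
      linarith [this.1, this.2]
    have hy2 : y ∈ Set.Icc (0:ℝ) 1 := ⟨by linarith, hy1⟩
    have hl : φ x ≤ φ z := hmono hx hz1 hz.1.le
    have hr : φ z ≤ φ y := hmono hz1 hy2 hzy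
    rw [Real.dist_eq, abs_lt]
    constructor <;> linarith
  have hunion := (hlc x hx).union hIoc
  apply hunion.mono
  intro z hz
  rcases le_or_gt z x with h' | h'
  · exact Or.inl h'
  · exact Or.inr ⟨h', hz.2⟩
end

section
/- Let p ≥ 2 and D = ⋃_{m∈ℕ} { i/(p^m − 1) : i ∈ {0, …, p^m − 2} }. For every x ∈ [0,1], the set D ∩ { (x+k)/p : k ∈ {0, …, p−1} } has at most one element, and it has exactly one element if and only if x ∈ D. -/
lemma castPS (p m : ℕ) (hp : 2 ≤ p) : ((p ^ m - 1 : ℕ) : ℝ) = (p:ℝ)^m - 1 := by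
  have h : 1 ≤ p ^ m := Nat.one_le_pow _ _ (by omega)
  rw [Nat.cast_sub h]; push_cast; ring

lemma posPS (p m : ℕ) (hp : 2 ≤ p) (hm : 1 ≤ m) : (1:ℝ) ≤ (p:ℝ)^m - 1 := by
  have h2 : (2:ℝ) ≤ (p:ℝ) := by exact_mod_cast hp
  have : (p:ℝ) ≤ (p:ℝ)^m := le_self_pow₀ (by linarith) (by omega)
  linarith

lemma rep_mul (p : ℕ) (hp : 2 ≤ p) {m : ℕ} (hm : 1 ≤ m) (i : ℕ) (hi : i ≤ p^m - 2)
    (q : ℕ) (hq : 1 ≤ q) :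
    ∃ I : ℕ, I ≤ p^(m*q) - 2 ∧ (I : ℝ) / ((p:ℝ)^(m*q) - 1) = (i:ℝ)/((p:ℝ)^m - 1) := by
  have hdvd : p^m - 1 ∣ p^(m*q) - 1 := by
    have := Nat.sub_dvd_pow_sub_pow (p^m) 1 q
    simpa [← pow_mul] using this
  obtain ⟨c, hc⟩ := hdvd
  have hpm2 : 2 ≤ p ^ m := by
    calc 2 ≤ p := hp
    _ = p^1 := (pow_one p).symm
    _ ≤ p^m := Nat.pow_le_pow_right (by omega) hm
  have hpmq2 : 2 ≤ p ^ (m*q) := by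
    calc 2 ≤ p := hp
    _ = p^1 := (pow_one p).symm
    _ ≤ p^(m*q) := Nat.pow_le_pow_right (by omega) (by nlinarith)
  have hc1 : 1 ≤ c := by
    rcases Nat.eq_zero_or_pos c with h | h
    · rw [h, Nat.mul_zero] at hc; omega
    · exact h
  refine ⟨i * c, ?_, ?_⟩
  · have h1 : i + 1 ≤ p^m - 1 := by omega
    have h2 : (i+1)*c ≤ (p^m-1)*c := Nat.mul_le_mul_right _ h1
    have h3 : i*c + c = (i+1)*c := by ring
    omega
  · have e1 : ((p^m - 1 : ℕ) : ℝ) * (c:ℝ) = (p:ℝ)^(m*q) - 1 := by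
      rw [← castPS p (m*q) hp, ← Nat.cast_mul, ← hc]
    rw [castPS p m hp] at e1
    have hne1 : ((p:ℝ)^m - 1) ≠ 0 := by have := posPS p m hp hm; linarith
    have hne2 : ((p:ℝ)^(m*q) - 1) ≠ 0 := by
      have := posPS p (m*q) hp (by nlinarith); linarith
    field_simp
    rw [← e1]; push_cast; ring

lemma coprime_int (p M : ℕ) (hp : 2 ≤ p) (hM : 1 ≤ M) :
    IsCoprime (p:ℤ) ((p:ℤ)^M - 1) := by
  refine ⟨(p:ℤ)^(M-1), -1, ?_⟩
  have h : (p:ℤ) * (p:ℤ)^(M-1) = (p:ℤ)^M := by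
    rw [← pow_succ']; congr 1; omega
  linear_combination h

/-- for every x ∈ [0,1], the set D ∩ {(x+k)/p : 0 ≤ k ≤ p-1} has
at most one element, and it is nonempty iff x ∈ D. -/
theorem stmt7 (p : ℕ) (hp : 2 ≤ p) (x : ℝ) (hx : x ∈ Set.Icc (0:ℝ) 1) :
    (padicD p ∩ {y | ∃ k : ℕ, k < p ∧ y = (x + k) / p}).Subsingleton ∧
    ((padicD p ∩ {y | ∃ k : ℕ, k < p ∧ y = (x + k) / p}).Nonempty ↔ x ∈ padicD p) := by
  obtain ⟨hx0, hx1⟩ := hx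
  have hp0 : (p:ℝ) ≠ 0 := by positivity
  have hpRpos : (0:ℝ) < (p:ℝ) := by positivity
  constructor
  · -- Subsingleton
    intro y1 hy1 y2 hy2
    obtain ⟨⟨m1, hm1, i1, hi1, he1⟩, k1, hk1, hf1⟩ := hy1
    obtain ⟨⟨m2, hm2, i2, hi2, he2⟩, k2, hk2, hf2⟩ := hy2
    obtain ⟨I1, hI1, hE1⟩ := rep_mul p hp hm1 i1 hi1 m2 hm2
    obtain ⟨I2, hI2, hE2⟩ := rep_mul p hp hm2 i2 hi2 m1 hm1
    rw [mul_comm m2 m1] at hI2 hE2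
    set M := m1 * m2 with hMdef
    have hM1 : 1 ≤ M := by
      have := Nat.mul_le_mul hm1 hm2; simpa using this
    have hN1 := posPS p M hp hM1
    have hN0 : ((p:ℝ)^M - 1) ≠ 0 := by linarith
    have hr1 : (x + (k1:ℝ)) * ((p:ℝ)^M - 1) = (I1:ℝ) * p := by
      have h : (x + (k1:ℝ))/p = (I1:ℝ)/((p:ℝ)^M - 1) := by rw [← hf1, he1, ← hE1]
      exact (div_eq_div_iff hp0 hN0).mp h
    have hr2 : (x + (k2:ℝ)) * ((p:ℝ)^M - 1) = (I2:ℝ) * p := by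
      have h : (x + (k2:ℝ))/p = (I2:ℝ)/((p:ℝ)^M - 1) := by rw [← hf2, he2, ← hE2]
      exact (div_eq_div_iff hp0 hN0).mp h
    have hint : (p:ℤ) * I1 - k1 * ((p:ℤ)^M - 1) = (p:ℤ) * I2 - k2 * ((p:ℤ)^M - 1) := by
      have hR : (p:ℝ) * I1 - k1 * ((p:ℝ)^M - 1) = (p:ℝ) * I2 - k2 * ((p:ℝ)^M - 1) := by
        linear_combination hr2 - hr1
      exact_mod_cast hR
    have hdvd : (p:ℤ) ∣ ((k1:ℤ) - k2) * ((p:ℤ)^M - 1) :=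
      ⟨(I1:ℤ) - I2, by linear_combination -hint⟩
    have hdk : (p:ℤ) ∣ ((k1:ℤ) - k2) :=
      (coprime_int p M hp hM1).dvd_of_dvd_mul_right hdvd
    have habs : |(k1:ℤ) - k2| < (p:ℤ) := by
      rw [abs_lt]; constructor <;> [omega; omega]
    have hzero : (k1:ℤ) - k2 = 0 := Int.eq_zero_of_abs_lt_dvd hdk habs
    have hk12 : k1 = k2 := by omega
    rw [hf1, hf2, hk12]
  · constructor
    · -- Nonempty → x ∈ D
      rintro ⟨y, ⟨m, hm, i, hi, hyD⟩, k, hk, hyk⟩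
      have hN1 := posPS p m hp hm
      have hN0 : ((p:ℝ)^m - 1) ≠ 0 := by linarith
      have hPm : 2 ≤ p ^ m := by
        calc 2 ≤ p := hp
        _ = p^1 := (pow_one p).symm
        _ ≤ p^m := Nat.pow_le_pow_right (by omega) hm
      rw [hyk] at hyD
      have hr : (x + (k:ℝ)) * ((p:ℝ)^m - 1) = (i:ℝ) * p := (div_eq_div_iff hp0 hN0).mp hyD
      set J : ℤ := (p:ℤ) * i - k * ((p:ℤ)^m - 1) with hJdef
      have hJr : (J:ℝ) = x * ((p:ℝ)^m - 1) := by
        push_cast [hJdef]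
        linear_combination -hr
      have hJ0 : 0 ≤ J := by
        have h : (0:ℝ) ≤ (J:ℝ) := by rw [hJr]; exact mul_nonneg hx0 (by linarith)
        exact_mod_cast h
      have hJle : J ≤ (p:ℤ)^m - 1 := by
        have h : (J:ℝ) ≤ (p:ℝ)^m - 1 := by rw [hJr]; nlinarith
        exact_mod_cast h
      have hJne : J ≠ (p:ℤ)^m - 1 := by
        intro hEq
        rw [hJdef] at hEq
        have hd : (p:ℤ) ∣ ((k:ℤ)+1) * ((p:ℤ)^m - 1) := ⟨(i:ℤ), by linear_combination -hEq⟩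
        have hdk : (p:ℤ) ∣ ((k:ℤ)+1) := (coprime_int p m hp hm).dvd_of_dvd_mul_right hd
        have hle : (p:ℤ) ≤ (k:ℤ)+1 := Int.le_of_dvd (by positivity) hdk
        have hkp : (k:ℤ) + 1 = p := by omega
        have h5 : (p:ℤ) * i = (p:ℤ) * ((p:ℤ)^m - 1) := by
          linear_combination hEq + ((p:ℤ)^m - 1) * hkp
        have h6 : (i:ℤ) = (p:ℤ)^m - 1 :=
          mul_left_cancel₀ (show (p:ℤ) ≠ 0 by positivity) h5
        have hiZ : (i:ℤ) ≤ ((p:ℤ))^m - 2 := by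
          zify [hPm] at hi; convert hi using 2 <;> push_cast <;> ring
        linarith
      have hJ2 : J ≤ (p:ℤ)^m - 2 := by
        have hlt : J < (p:ℤ)^m - 1 := lt_of_le_of_ne hJle hJne
        linarith [Int.lt_iff_add_one_le.mp hlt]
      refine ⟨m, hm, J.toNat, ?_, ?_⟩
      · have hle2 : J ≤ ((p^m - 2 : ℕ) : ℤ) := by
          rw [Nat.cast_sub hPm]; push_cast; linarith
        exact Int.toNat_le.mpr hle2
      · have hJt : ((J.toNat : ℕ) : ℝ) = (J : ℝ) := by
          rw [← Int.cast_natCast, Int.toNat_of_nonneg hJ0]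
        rw [eq_div_iff hN0, hJt]
        exact hJr.symm
    · -- x ∈ D → Nonempty
      rintro ⟨m, hm, j, hj, hxe⟩
      have hN1 := posPS p m hp hm
      have hN0 : ((p:ℝ)^m - 1) ≠ 0 := by linarith
      have hPm : 2 ≤ p ^ m := by
        calc 2 ≤ p := hp
        _ = p^1 := (pow_one p).symm
        _ ≤ p^m := Nat.pow_le_pow_right (by omega) hm
      set k := j % p with hkdef
      set a := j / p with hadef
      set i := a + k * p^(m-1) with hidef
      have hdm : (p:ℤ) * a + k = (j:ℤ) := by exact_mod_cast Nat.div_add_mod j p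
      have h2 : (p:ℤ) * (p:ℤ)^(m-1) = (p:ℤ)^m := by
        rw [← pow_succ']; congr 1; omega
      have hpi : (p:ℤ) * i = (j:ℤ) + (k:ℤ) * ((p:ℤ)^m - 1) := by
        rw [hidef]; push_cast
        linear_combination hdm + (k:ℤ) * h2
      have hkp : k < p := Nat.mod_lt _ (by omega)
      have hjZ : (j:ℤ) ≤ (p:ℤ)^m - 2 := by
        zify [hPm] at hj; convert hj using 2 <;> push_cast <;> ring
      have hkZ : (k:ℤ) ≤ (p:ℤ) - 1 := by
        have : (k:ℤ) < (p:ℤ) := by exact_mod_cast hkp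
        omega
      have hQ1 : (0:ℤ) ≤ (p:ℤ)^m - 1 := by
        have : ((2:ℤ)) ≤ (p:ℤ)^m := by exact_mod_cast hPm
        omega
      have hmul : (k:ℤ) * ((p:ℤ)^m - 1) ≤ ((p:ℤ) - 1) * ((p:ℤ)^m - 1) :=
        mul_le_mul_of_nonneg_right hkZ hQ1
      have hle : (p:ℤ) * i ≤ (p:ℤ) * ((p:ℤ)^m - 1) - 1 := by nlinarith
      have hi2 : i ≤ p^m - 2 := by
        have hlt : (i:ℤ) < (p:ℤ)^m - 1 := by
          have h7 : (p:ℤ) * i < (p:ℤ) * ((p:ℤ)^m - 1) := by linarith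
          exact lt_of_mul_lt_mul_left h7 (by positivity)
        zify [hPm]
        push_cast
        linarith
      have hxN : x * ((p:ℝ)^m - 1) = (j:ℝ) := by
        rw [hxe]; field_simp
      have hpiR : (p:ℝ) * i = (j:ℝ) + (k:ℝ) * ((p:ℝ)^m - 1) := by exact_mod_cast hpi
      refine ⟨(x + k)/p, ⟨m, hm, i, hi2, ?_⟩, k, hkp, rfl⟩
      rw [div_eq_div_iff hp0 hN0]
      linear_combination hxN - hpiR
end

section
/- Let p ≥ 2 and l ∈ {0, …, p−2}. The function φ : [0,1] → [0,1] defined by φ(x) = 1 if x > l/(p−1) and φ(x) = 0 otherwise satisfies φ(x) = Σ_{k=0}^{p−1}[φ((x+k)/p) − φ(k/p)] for every x ∈ [0,1]. -/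
/-- for l ∈ {0,…,p-2}, the characteristic function of
(l/(p-1), 1] satisfies the functional equation
φ(x) = Σ_{k=0}^{p-1}[φ((x+k)/p) − φ(k/p)] on [0,1]. -/
theorem stmt10 (p l : ℕ) (hp : 2 ≤ p) (hl : l ≤ p - 2)
    (φ : ℝ → ℝ)
    (hφ : ∀ x : ℝ, φ x = if (l : ℝ) / ((p : ℝ) - 1) < x then 1 else 0) :
    ∀ x ∈ Set.Icc (0:ℝ) 1,
      φ x = ∑ k ∈ Finset.range p, (φ ((x + k) / p) - φ ((k : ℝ) / p)) := by
  intro x hx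
  obtain ⟨hx0, hx1⟩ := hx
  have hp2 : (2:ℝ) ≤ (p:ℝ) := by exact_mod_cast hp
  have hP : (0:ℝ) < p := by linarith
  have hP1 : (0:ℝ) < (p:ℝ) - 1 := by linarith
  have hlp : l + 2 ≤ p := by omega
  have hlP : (l:ℝ) + 2 ≤ p := by exact_mod_cast hlp
  have hl0 : (0:ℝ) ≤ l := Nat.cast_nonneg l
  have key : ∀ k ∈ Finset.range p,
      φ ((x + k) / p) - φ ((k : ℝ) / p)
        = if k = l then (if (l : ℝ) / ((p : ℝ) - 1) < x then (1:ℝ) else 0) else 0 := by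
    intro k hk
    rw [hφ, hφ]
    rcases lt_trichotomy k l with h | h | h
    · have hk1 : (k:ℝ) + 1 ≤ l := by exact_mod_cast h
      have h1 : ¬ ((l : ℝ) / ((p : ℝ) - 1) < (x + k) / p) := by
        rw [div_lt_div_iff₀ hP1 hP]; push_neg; nlinarith
      have h2 : ¬ ((l : ℝ) / ((p : ℝ) - 1) < (k:ℝ) / p) := by
        rw [div_lt_div_iff₀ hP1 hP]; push_neg; nlinarith
      simp [h1, h2, h.ne]
    · subst h
      have h2 : ¬ ((k : ℝ) / ((p : ℝ) - 1) < (k:ℝ) / p) := by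
        rw [div_lt_div_iff₀ hP1 hP]; push_neg; nlinarith
      have h1 : ((k : ℝ) / ((p : ℝ) - 1) < (x + k) / p) ↔ ((k:ℝ)/((p:ℝ)-1) < x) := by
        rw [div_lt_div_iff₀ hP1 hP, div_lt_iff₀ hP1]
        constructor <;> intro hh <;> nlinarith
      simp only [if_pos rfl, h2, if_false]
      by_cases hc : (k:ℝ)/((p:ℝ)-1) < x
      · rw [if_pos (h1.mpr hc), if_pos hc]; simp
      · rw [if_neg (fun hh => hc (h1.mp hh)), if_neg hc]; simp
    · have hk1 : (l:ℝ) + 1 ≤ k := by exact_mod_cast h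
      have h1 : ((l : ℝ) / ((p : ℝ) - 1) < (x + k) / p) := by
        rw [div_lt_div_iff₀ hP1 hP]; nlinarith
      have h2 : ((l : ℝ) / ((p : ℝ) - 1) < (k:ℝ) / p) := by
        rw [div_lt_div_iff₀ hP1 hP]; nlinarith
      simp [h1, h2, h.ne']
  rw [Finset.sum_congr rfl key, Finset.sum_ite_eq' (Finset.range p) l]
  rw [if_pos (Finset.mem_range.mpr (by omega))]
  exact hφ x
end

section
/- Let p ≥ 2, m ≥ 2, and let y₀ < y₁ < ⋯ < y_{m−1} be the m distinct elements of a set D^m_l = { (l·p^n mod (p^m−1))/(p^m−1) : n ∈ {0, …, m−1} } of cardinality m, where l ∈ {1, …, p^m − 2}, and assume 0 < y₀ and y_{m−1} < 1. Then the function φ(x) = (1/m) Σ_{i=0}^{m−1} χ_{(y_i, 1]}(x) satisfies φ(x) = Σ_{k=0}^{p−1}[φ((x+k)/p) − φ(k/p)] for every x ∈ [0,1]. -/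
/-- if y₀ < ⋯ < y_{m-1} enumerate the m-element set
D^m_l = {(l·p^n mod (p^m-1))/(p^m-1) : n < m} ⊆ (0,1), then
φ(x) = (1/m) Σ_i χ_{(y_i,1]}(x) satisfies the functional equation. -/
theorem stmt13 (p m l : ℕ) (hp : 2 ≤ p) (hm : 2 ≤ m)
    (hl1 : 1 ≤ l) (hl2 : l ≤ p ^ m - 2)
    (y : ℕ → ℝ)
    (hmono : ∀ i j, i < j → j < m → y i < y j)
    (h0 : 0 < y 0) (h1 : y (m - 1) < 1)
    (henum : {z : ℝ | ∃ i < m, z = y i}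
      = {z : ℝ | ∃ n < m, z = ((l * p ^ n % (p ^ m - 1) : ℕ) : ℝ) / ((p : ℝ) ^ m - 1)}) :
    ∀ x ∈ Set.Icc (0:ℝ) 1,
      (1 / m : ℝ) * ∑ i ∈ Finset.range m, (if y i < x then (1:ℝ) else 0)
        = ∑ k ∈ Finset.range p,
            ((1 / m : ℝ) * ∑ i ∈ Finset.range m,
                (if y i < (x + k) / p then (1:ℝ) else 0)
              - (1 / m : ℝ) * ∑ i ∈ Finset.range m,
                (if y i < (k : ℝ) / p then (1:ℝ) else 0)) := by
  intro x hx
  obtain ⟨hx0, hx1⟩ := hx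
  have hm0 : 0 < m := by omega
  have hp0 : 0 < p := by omega
  have hp0R : (0:ℝ) < p := by exact_mod_cast hp0
  have hpm : 4 ≤ p ^ m := by
    calc (4:ℕ) = 2 ^ 2 := by norm_num
    _ ≤ p ^ 2 := Nat.pow_le_pow_left hp 2
    _ ≤ p ^ m := Nat.pow_le_pow_right hp0 hm
  set N := p ^ m - 1 with hNdef
  have hN0 : 0 < N := by omega
  have hNsucc : N + 1 = p ^ m := by omega
  have hNR : (N : ℝ) = (p : ℝ) ^ m - 1 := by
    have h1' : ((p ^ m : ℕ) : ℝ) = (p : ℝ) ^ m := by push_cast; ring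
    rw [hNdef, Nat.cast_sub (by omega : 1 ≤ p ^ m), h1']; norm_num
  have hNR0 : (0:ℝ) < (N:ℝ) := by exact_mod_cast hN0
  -- membership in both directions
  have hA : ∀ i, i < m → ∃ n, n < m ∧ y i = ((l * p ^ n % N : ℕ) : ℝ) / (N : ℝ) := by
    intro i hi
    have hmem : y i ∈ {z : ℝ | ∃ n < m, z = ((l * p ^ n % N : ℕ) : ℝ) / ((p : ℝ) ^ m - 1)} := by
      rw [← henum]; exact ⟨i, hi, rfl⟩
    obtain ⟨n, hn, hz⟩ := hmem
    exact ⟨n, hn, by rw [hz, hNR]⟩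
  have hA' : ∀ n, n < m → ∃ i, i < m ∧ y i = ((l * p ^ n % N : ℕ) : ℝ) / (N : ℝ) := by
    intro n hn
    have hmem : ((l * p ^ n % N : ℕ) : ℝ) / ((p : ℝ) ^ m - 1) ∈ {z : ℝ | ∃ i < m, z = y i} := by
      rw [henum]; exact ⟨n, hn, rfl⟩
    obtain ⟨i, hi, hz⟩ := hmem
    exact ⟨i, hi, by rw [← hz, hNR]⟩
  -- bounds on the y i
  have hpos : ∀ i, i < m → 0 < y i ∧ y i < 1 := by
    intro i hi
    constructor
    · rcases Nat.eq_zero_or_pos i with h | h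
      · rw [h]; exact h0
      · exact h0.trans (hmono 0 i h hi)
    · rcases eq_or_lt_of_le (Nat.le_pred_of_lt hi) with h | h
      · rw [h]; exact h1
      · exact (hmono i (m - 1) h (by omega)).trans h1
  -- the key shift structure: p * y i = q + y j
  have hB : ∀ i, ∃ j q, (j < m ∧ q < p) ∧ (i < m → (p : ℝ) * y i = (q : ℝ) + y j) := by
    intro i
    by_cases hi : i < m
    · obtain ⟨n, hn, hyi⟩ := hA i hi
      set a := l * p ^ n % N with hadef
      have ha : a < N := Nat.mod_lt _ hN0
      have hmod : (p * a) % N = l * p ^ ((n + 1) % m) % N := by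
        have h1' : (p * a) % N = (l * p ^ (n + 1)) % N := by
          have hme : p * a ≡ p * (l * p ^ n) [MOD N] := (Nat.mod_modEq _ N).mul_left p
          calc (p * a) % N = (p * (l * p ^ n)) % N := hme
          _ = (l * p ^ (n + 1)) % N := by ring_nf
        rw [h1']
        rcases Nat.lt_or_ge (n + 1) m with h | h
        · rw [Nat.mod_eq_of_lt h]
        · have hh : n + 1 = m := by omega
          rw [hh, Nat.mod_self, pow_zero, mul_one, ← hNsucc]
          calc (l * (N + 1)) % N = (N * l + l) % N := by ring_nf
          _ = l % N := Nat.mul_add_mod N l l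
      obtain ⟨j, hj, hyj⟩ := hA' ((n + 1) % m) (Nat.mod_lt _ hm0)
      refine ⟨j, p * a / N, ⟨hj, ?_⟩, fun _ => ?_⟩
      · rw [Nat.div_lt_iff_lt_mul hN0]
        calc p * a < p * N := mul_lt_mul_of_pos_left ha hp0
        _ = p * N := rfl
      · rw [hyi, hyj, ← hmod]
        have hd : N * (p * a / N) + (p * a) % N = p * a := Nat.div_add_mod (p * a) N
        have hNne : (N : ℝ) ≠ 0 := ne_of_gt hNR0
        have hcast : ((p * a : ℕ) : ℝ) = (N : ℝ) * ((p * a / N : ℕ) : ℝ) + ((p * a % N : ℕ) : ℝ) := by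
          exact_mod_cast hd.symm
        have hstep : (p : ℝ) * ((a : ℝ) / (N : ℝ)) = ((p * a : ℕ) : ℝ) / (N : ℝ) := by
          push_cast; ring
        rw [hstep, hcast, add_div, mul_comm (N:ℝ), mul_div_assoc, div_self hNne, mul_one]
    · exact ⟨0, 0, ⟨by omega, by omega⟩, fun h => absurd h hi⟩
  choose σ τ hbound heq using hB
  -- coprimality
  have hcop : Nat.Coprime N p := by
    have h1' : Nat.Coprime N (p ^ m) := by
      rw [← hNsucc]
      simpa using Nat.coprime_self_add_right.mpr (Nat.coprime_one_right N)
    exact Nat.Coprime.coprime_dvd_right (dvd_pow_self p (by omega : m ≠ 0)) h1'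
  have hcopZ : IsCoprime (N : ℤ) (p : ℤ) := by
    rw [Nat.isCoprime_iff_coprime]; exact hcop
  -- injectivity of σ on range m
  have hinj : ∀ i i', i < m → i' < m → σ i = σ i' → i = i' := by
    intro i i' hi hi' hσ
    obtain ⟨n, hn, hyi⟩ := hA i hi
    obtain ⟨n', hn', hyi'⟩ := hA i' hi'
    set a := l * p ^ n % N with hadef
    set a' := l * p ^ n' % N with hadef'
    have ha : a < N := Nat.mod_lt _ hN0
    have ha' : a' < N := Nat.mod_lt _ hN0
    have e1 := heq i hi
    have e2 := heq i' hi'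
    rw [hσ] at e1
    have hR : (p : ℝ) * ((a : ℝ) - (a' : ℝ)) = ((τ i : ℝ) - (τ i' : ℝ)) * (N : ℝ) := by
      rw [hyi] at e1; rw [hyi'] at e2
      have hNne : (N : ℝ) ≠ 0 := ne_of_gt hNR0
      field_simp at e1 e2 ⊢
      linarith
    have hZ : (p : ℤ) * ((a : ℤ) - (a' : ℤ)) = ((τ i : ℤ) - (τ i' : ℤ)) * (N : ℤ) := by
      exact_mod_cast hR
    have hdvd : (N : ℤ) ∣ (p : ℤ) * ((a : ℤ) - (a' : ℤ)) := ⟨(τ i : ℤ) - (τ i' : ℤ), by linarith⟩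
    have hdvd' : (N : ℤ) ∣ ((a : ℤ) - (a' : ℤ)) := hcopZ.dvd_of_dvd_mul_left hdvd
    have haa : (a : ℤ) = (a' : ℤ) := by
      have habs : |(a : ℤ) - (a' : ℤ)| < (N : ℤ) := by
        rw [abs_sub_lt_iff]
        constructor <;> [skip; skip] <;> push_cast <;> omega
      have := Int.eq_zero_of_abs_lt_dvd hdvd' habs
      omega
    have haaN : a = a' := by exact_mod_cast haa
    have hyy : y i = y i' := by rw [hyi, hyi', haaN]
    rcases lt_trichotomy i i' with h | h | h
    · exact absurd (hmono i i' h hi') (by rw [hyy]; exact lt_irrefl _)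
    · exact h
    · exact absurd (hmono i' i h hi) (by rw [hyy]; exact lt_irrefl _)
  -- per-i inner sum collapses
  have hD : ∀ i, i < m →
      (∑ k ∈ Finset.range p, ((if y i < (x + (k:ℝ)) / p then (1:ℝ) else 0)
        - (if y i < (k : ℝ) / p then (1:ℝ) else 0)))
      = (if y (σ i) < x then (1:ℝ) else 0) := by
    intro i hi
    have hσm : σ i < m := (hbound i).1
    have hτp : τ i < p := (hbound i).2
    obtain ⟨hσ0, hσ1⟩ := hpos (σ i) hσm
    have he := heq i hi
    have hcond : ∀ c : ℝ, (y i < c / p ↔ (τ i : ℝ) + y (σ i) < c) := by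
      intro c
      rw [lt_div_iff₀ hp0R]
      constructor <;> intro h <;> nlinarith [he]
    rw [Finset.sum_eq_single_of_mem (τ i) (Finset.mem_range.mpr hτp)]
    · simp only [hcond]
      have hno : ¬((τ i : ℝ) + y (σ i) < (τ i : ℝ)) := by linarith
      rw [if_neg hno, sub_zero]
      have hiff : ((τ i : ℝ) + y (σ i) < x + (τ i : ℝ)) ↔ (y (σ i) < x) := by
        constructor <;> intro <;> linarith
      rw [if_congr hiff rfl rfl]
    · intro k hk hne
      simp only [hcond]
      rcases Ne.lt_or_gt hne with hlt | hlt
      · have hr : (k : ℝ) + 1 ≤ (τ i : ℝ) := by exact_mod_cast hlt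
        split_ifs <;> linarith
      · have hr : (τ i : ℝ) + 1 ≤ (k : ℝ) := by exact_mod_cast hlt
        split_ifs <;> linarith
  -- reassemble
  have step1 : ∑ k ∈ Finset.range p,
            ((1 / m : ℝ) * ∑ i ∈ Finset.range m,
                (if y i < (x + k) / p then (1:ℝ) else 0)
              - (1 / m : ℝ) * ∑ i ∈ Finset.range m,
                (if y i < (k : ℝ) / p then (1:ℝ) else 0))
      = (1 / m : ℝ) * ∑ i ∈ Finset.range m, ∑ k ∈ Finset.range p,
            ((if y i < (x + (k:ℝ)) / p then (1:ℝ) else 0)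
              - (if y i < (k : ℝ) / p then (1:ℝ) else 0)) := by
    simp only [← Finset.sum_sub_distrib, ← mul_sub]
    rw [← Finset.mul_sum, Finset.sum_comm]
  rw [step1]
  congr 1
  rw [Finset.sum_congr rfl fun i hi => hD i (Finset.mem_range.mp hi)]
  refine (Finset.sum_bij (fun i (_ : i ∈ Finset.range m) => σ i) ?_ ?_ ?_ ?_).symm
  · intro a ha
    exact Finset.mem_range.mpr (hbound a).1
  · intro a1 ha1 a2 ha2 h
    exact hinj a1 a2 (Finset.mem_range.mp ha1) (Finset.mem_range.mp ha2) h
  · intro b hb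
    obtain ⟨a, ha, hab⟩ := Finset.surj_on_of_inj_on_of_card_le
      (fun i (_ : i ∈ Finset.range m) => σ i)
      (fun a _ => Finset.mem_range.mpr (hbound a).1)
      (fun a1 a2 ha1 ha2 h => hinj a1 a2 (Finset.mem_range.mp ha1) (Finset.mem_range.mp ha2) h)
      (le_refl _) b hb
    exact ⟨a, ha, hab.symm⟩
  · intro a ha
    rfl
end

section
/- Let p ≥ 2, let φ : [0,1] → [0,1] be non-decreasing, left-continuous with φ(0)=0, φ(1)=1, satisfying φ(x) = Σ_{k=0}^{p−1}[φ((x+k)/p) − φ(k/p)] for all x, and with φ(0+) = 0. Suppose φ has jump α := φ(z₀+) − φ(z₀) at some z₀ ∈ [0,1]. Define C_m = { (z₀ + i)/p^{m−1} : i ∈ {0, …, p^{m−1} − 1} } for m ≥ 1. Then Σ_{x∈C_m} [φ(x+) − φ(x)] = α for every m ∈ ℕ. -/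
open Set Filter Function Finset Topology

private lemma sum_range_mul' (f : ℕ → ℝ) (a b : ℕ) :
    ∑ j ∈ Finset.range (a * b), f j
      = ∑ i ∈ Finset.range a, ∑ k ∈ Finset.range b, f (i + k * a) := by
  induction b with
  | zero => simp
  | succ b ih =>
    rw [Nat.mul_succ, Finset.sum_range_add, ih]
    simp only [Finset.sum_range_succ, Finset.sum_add_distrib]
    congr 1
    exact Finset.sum_congr rfl fun x _ => by rw [Nat.mul_comm, Nat.add_comm]



/-- for a non-decreasing left-continuous solution φ of the
functional equation with φ(0)=0, φ(1)=1, φ(0+)=0, and jump α at z₀, the sum of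
the jumps of φ over C_m = {(z₀+i)/p^{m-1} : 0 ≤ i ≤ p^{m-1}-1} equals α for all m ≥ 1. -/
theorem stmt15 (p : ℕ) (hp : 2 ≤ p) (φ : ℝ → ℝ)
    (hmono : MonotoneOn φ (Set.Icc 0 1))
    (hrange : ∀ x ∈ Set.Icc (0:ℝ) 1, φ x ∈ Set.Icc (0:ℝ) 1)
    (h0 : φ 0 = 0) (h1 : φ 1 = 1)
    (hlc : ∀ x ∈ Set.Icc (0:ℝ) 1, ContinuousWithinAt φ (Set.Iic x) x)
    (hFE : ∀ x ∈ Set.Icc (0:ℝ) 1,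
      φ x = ∑ k ∈ Finset.range p, (φ ((x + k) / p) - φ ((k : ℝ) / p)))
    (h0plus : Filter.Tendsto φ (nhdsWithin 0 (Set.Ioi 0)) (nhds 0))
    (z₀ : ℝ) (hz : z₀ ∈ Set.Icc (0:ℝ) 1)
    (α : ℝ) (hα : α = if z₀ < 1 then Function.rightLim φ z₀ - φ z₀ else 0) :
    ∀ m : ℕ, 1 ≤ m →
      ∑ i ∈ Finset.range (p ^ (m - 1)),
        (if (z₀ + i) / (p : ℝ) ^ (m - 1) < 1
          then Function.rightLim φ ((z₀ + i) / (p : ℝ) ^ (m - 1))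
            - φ ((z₀ + i) / (p : ℝ) ^ (m - 1))
          else 0) = α := by
  have hppos : (0:ℝ) < p := by positivity
  -- the clipped extension of φ
  set ψ : ℝ → ℝ := fun y => φ (min 1 (max 0 y)) with hψdef
  have hclip : ∀ y : ℝ, min 1 (max 0 y) ∈ Set.Icc (0:ℝ) 1 := fun y =>
    ⟨le_min zero_le_one (le_max_left _ _), min_le_left _ _⟩
  have hψmono : Monotone ψ := fun a b hab =>
    hmono (hclip a) (hclip b) (min_le_min le_rfl (max_le_max le_rfl hab))
  have hψeq : ∀ y ∈ Set.Icc (0:ℝ) 1, ψ y = φ y := by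
    intro y hy
    simp only [hψdef, max_eq_right hy.1, min_eq_right hy.2]
  -- right limits exist for points in [0,1)
  have hT : ∀ c ∈ Set.Ico (0:ℝ) 1, Tendsto φ (𝓝[>] c) (𝓝 (Function.rightLim φ c)) := by
    intro c hc
    have h1' : Tendsto ψ (𝓝[>] c) (𝓝 (sInf (ψ '' Set.Ioi c))) :=
      hψmono.tendsto_nhdsGT c
    have hev : ψ =ᶠ[𝓝[>] c] φ := by
      filter_upwards [Ioo_mem_nhdsGT hc.2] with y hy
      exact hψeq y ⟨hc.1.trans hy.1.le, hy.2.le⟩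
    have h2 : Tendsto φ (𝓝[>] c) (𝓝 (sInf (ψ '' Set.Ioi c))) := h1'.congr' hev
    have h3 := rightLim_eq_of_tendsto h2
    rw [h3]; exact h2
  -- the jump function
  set J : ℝ → ℝ := fun x =>
    if x < 1 then Function.rightLim φ x - φ x else 0 with hJdef
  -- jump relation
  have hJ : ∀ x ∈ Set.Ico (0:ℝ) 1,
      J x = ∑ k ∈ Finset.range p, J ((x + k) / p) := by
    intro x hx
    have hmem : ∀ k ∈ Finset.range p, (x + (k:ℝ)) / p ∈ Set.Ico (0:ℝ) 1 := by
      intro k hk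
      have hk' : (k:ℝ) ≤ (p:ℝ) - 1 := by
        have h5 := Finset.mem_range.1 hk
        have h6 : (k:ℝ) + 1 ≤ (p:ℝ) := by exact_mod_cast h5
        linarith
      refine ⟨div_nonneg (add_nonneg hx.1 (Nat.cast_nonneg k)) hppos.le, ?_⟩
      rw [div_lt_one hppos]; linarith [hx.1, hx.2]
    have hsum : Tendsto (fun y => ∑ k ∈ Finset.range p,
        (φ ((y + k) / p) - φ ((k:ℝ) / p))) (𝓝[>] x)
        (𝓝 (∑ k ∈ Finset.range p,
          (Function.rightLim φ ((x + k) / p) - φ ((k:ℝ) / p)))) := by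
      apply tendsto_finset_sum
      intro k hk
      have haff : Tendsto (fun y => (y + (k:ℝ)) / p) (𝓝[>] x) (𝓝[>] ((x + k) / p)) := by
        apply tendsto_nhdsWithin_of_tendsto_nhds_of_eventually_within
        · exact (((continuous_id.add continuous_const).div_const _).tendsto x).mono_left
            nhdsWithin_le_nhds
        · filter_upwards [self_mem_nhdsWithin] with y hy
          have : x < y := hy
          exact (div_lt_div_iff_of_pos_right hppos).2 (by linarith)
      exact ((hT _ (hmem k hk)).comp haff).sub tendsto_const_nhds
    have hev2 : (fun y => ∑ k ∈ Finset.range p, (φ ((y + k) / p) - φ ((k:ℝ) / p)))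
        =ᶠ[𝓝[>] x] φ := by
      filter_upwards [Ioo_mem_nhdsGT hx.2] with y hy
      exact (hFE y ⟨hx.1.trans hy.1.le, hy.2.le⟩).symm
    have key : Tendsto φ (𝓝[>] x)
        (𝓝 (∑ k ∈ Finset.range p,
          (Function.rightLim φ ((x + k) / p) - φ ((k:ℝ) / p)))) := hsum.congr' hev2
    have hrl : Function.rightLim φ x = ∑ k ∈ Finset.range p,
        (Function.rightLim φ ((x + k) / p) - φ ((k:ℝ) / p)) :=
      rightLim_eq_of_tendsto key
    have hJx : J x = Function.rightLim φ x - φ x := if_pos hx.2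
    have hJk : ∀ k ∈ Finset.range p,
        J ((x + (k:ℝ)) / p) = Function.rightLim φ ((x + k) / p) - φ ((x + k) / p) :=
      fun k hk => if_pos (hmem k hk).2
    rw [hJx, Finset.sum_congr rfl hJk, hrl, hFE x ⟨hx.1, hx.2.le⟩,
      ← Finset.sum_sub_distrib]
    exact Finset.sum_congr rfl fun k _ => by ring
  -- J 0 = 0
  have hJ0 : J 0 = 0 := by
    have h4 : Function.rightLim φ (0:ℝ) = 0 :=
      rightLim_eq_of_tendsto h0plus
    simp only [hJdef, if_pos (zero_lt_one' ℝ), h4, h0, sub_zero]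
  -- main induction
  have hMain : ∀ z ∈ Set.Ico (0:ℝ) 1, ∀ n : ℕ,
      ∑ i ∈ Finset.range (p ^ n), J ((z + i) / (p:ℝ) ^ n) = J z := by
    intro z hzz n
    induction n with
    | zero => simp
    | succ n ih =>
      have hpm : (0:ℝ) < (p:ℝ) ^ n := by positivity
      rw [pow_succ, pow_succ, sum_range_mul' (fun j => J ((z + j) / ((p:ℝ) ^ n * p))) (p ^ n) p]
      have hinner : ∀ i ∈ Finset.range (p ^ n),
          ∑ k ∈ Finset.range p, J ((z + ((i + k * p ^ n : ℕ) : ℝ)) / ((p:ℝ) ^ n * p))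
            = J ((z + i) / (p:ℝ) ^ n) := by
        intro i hi
        have hx : (z + (i:ℝ)) / (p:ℝ) ^ n ∈ Set.Ico (0:ℝ) 1 := by
          have hi' : (i:ℝ) + 1 ≤ (p:ℝ) ^ n := by
            have := Finset.mem_range.1 hi
            exact_mod_cast this
          refine ⟨div_nonneg (add_nonneg hzz.1 (Nat.cast_nonneg i)) hpm.le, ?_⟩
          rw [div_lt_one hpm]; linarith [hzz.1, hzz.2]
        rw [hJ _ hx]
        apply Finset.sum_congr rfl
        intro k _
        congr 1
        push_cast
        field_simp
        ring
      rw [Finset.sum_congr rfl hinner, ih]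
  -- conclusion
  intro m hm
  show ∑ i ∈ Finset.range (p ^ (m - 1)), J ((z₀ + i) / (p:ℝ) ^ (m - 1)) = α
  by_cases hlt : z₀ < 1
  · rw [hα, if_pos hlt, ← (if_pos hlt : J z₀ = _)]
    exact hMain z₀ ⟨hz.1, hlt⟩ (m - 1)
  · have hz1 : z₀ = 1 := le_antisymm hz.2 (not_lt.1 hlt)
    subst hz1
    rw [hα, if_neg hlt]
    set n := p ^ (m - 1) with hn
    set N := (p:ℝ) ^ (m - 1) with hN
    have hNn : ((n:ℕ):ℝ) = N := by push_cast [hn, hN]; ring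
    have hNpos : (0:ℝ) < N := by positivity
    have hstep : ∀ i ∈ Finset.range n,
        J ((1 + (i:ℝ)) / N) = (fun j : ℕ => J ((0 + (j:ℝ)) / N)) (i + 1) := by
      intro i _
      simp only []
      congr 1
      push_cast
      ring
    rw [Finset.sum_congr rfl hstep]
    have e1 := Finset.sum_range_succ' (fun j : ℕ => J ((0 + (j:ℝ)) / N)) n
    have e2 := Finset.sum_range_succ (fun j : ℕ => J ((0 + (j:ℝ)) / N)) n
    have e3 : ∑ i ∈ Finset.range n, J ((0 + (i:ℝ)) / N) = J 0 :=
      hMain 0 ⟨le_rfl, zero_lt_one⟩ (m - 1)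
    have e4 : J ((0 + (n:ℝ)) / N) = 0 := by
      have : (0 + (n:ℝ)) / N = 1 := by rw [zero_add, hNn, div_self hNpos.ne']
      rw [this, hJdef]; simp
    have e5 : J ((0 + ((0:ℕ):ℝ)) / N) = J 0 := by norm_num
    rw [e1] at e2
    have : ∑ i ∈ Finset.range n, J ((0 + ((i+1:ℕ):ℝ)) / N) = 0 := by
      push_cast at e2 ⊢
      push_cast at e3 e4 e5
      linarith [e2, e3, e4, e5, hJ0]
    convert this using 2 with i
end

section
/- Let p ≥ 2, m ≥ 2, l ∈ {1, …, p^m − 2}, and x ∈ D^m_l := { (l·p^n mod (p^m−1))/(p^m−1) : n ∈ {0, …, m−1} }. Then: (i) there exist unique y ∈ D^m_l and k ∈ {0, …, p−1} with x = (y+k)/p; and (ii) there exist unique z ∈ D^m_l and q ∈ {0, …, p−1} with z = (x+q)/p. -/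
/-- for x ∈ D^m_l = {(l·p^n mod (p^m-1))/(p^m-1) : n < m}:
(i) there are unique y ∈ D^m_l and k ∈ {0,…,p-1} with x = (y+k)/p;
(ii) there are unique z ∈ D^m_l and q ∈ {0,…,p-1} with z = (x+q)/p. -/
theorem stmt17 (p m l : ℕ) (hp : 2 ≤ p) (hm : 2 ≤ m)
    (hl1 : 1 ≤ l) (hl2 : l ≤ p ^ m - 2)
    (x : ℝ)
    (hx : x ∈ {z : ℝ | ∃ n < m,
      z = ((l * p ^ n % (p ^ m - 1) : ℕ) : ℝ) / ((p : ℝ) ^ m - 1)}) :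
    (∃! yk : ℝ × ℕ,
      yk.1 ∈ {z : ℝ | ∃ n < m,
          z = ((l * p ^ n % (p ^ m - 1) : ℕ) : ℝ) / ((p : ℝ) ^ m - 1)} ∧
        yk.2 < p ∧ x = (yk.1 + yk.2) / p) ∧
    (∃! zq : ℝ × ℕ,
      zq.1 ∈ {z : ℝ | ∃ n < m,
          z = ((l * p ^ n % (p ^ m - 1) : ℕ) : ℝ) / ((p : ℝ) ^ m - 1)} ∧
        zq.2 < p ∧ zq.1 = (x + zq.2) / p) := by
  obtain ⟨n, hn, hxn⟩ := hx
  set N := p ^ m - 1 with hNdef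
  have hm0 : 0 < m := by omega
  have h4 : 2 ^ 2 ≤ p ^ m :=
    (Nat.pow_le_pow_right (by omega) hm).trans (Nat.pow_le_pow_left hp m)
  have hpm : p ^ m = N + 1 := by omega
  have hNpos : 0 < N := by omega
  have hpp : p * p ≤ p ^ m := by
    calc p * p = p ^ 2 := (sq p).symm
    _ ≤ p ^ m := Nat.pow_le_pow_right (by omega) hm
  have hpN : p < N := by nlinarith
  have hNR : ((p : ℝ) ^ m - 1) = (N : ℝ) := by
    have h : ((p : ℝ) ^ m) = (N : ℝ) + 1 := by exact_mod_cast hpm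
    linarith
  have hNRpos : (0 : ℝ) < (N : ℝ) := by exact_mod_cast hNpos
  set a : ℕ → ℕ := fun j => l * p ^ j % N with ha
  have ha_lt : ∀ j, a j < N := fun j => Nat.mod_lt _ hNpos
  have hcop : Nat.Coprime p N := by
    have h1 : Nat.Coprime (p ^ m) N := by
      rw [hpm]; simp [Nat.coprime_self_add_left]
    exact (Nat.coprime_pow_left_iff hm0 p N).mp h1
  have ha_pos : ∀ j, 0 < a j := by
    intro j
    rcases Nat.eq_zero_or_pos (a j) with h | h
    · exfalso
      have hdvd : N ∣ l * p ^ j := Nat.dvd_of_mod_eq_zero h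
      have hdl : N ∣ l := (Nat.Coprime.dvd_of_dvd_mul_right
        ((hcop.symm).pow_right j) hdvd)
      have := Nat.le_of_dvd (by omega) hdl
      omega
    · exact h
  -- step relation : p * a j = N * (p * a j / N) + a (j+1)
  have hstep : ∀ j, p * a j = N * (p * a j / N) + a (j + 1) := by
    intro j
    have h1 : a (j + 1) = (p * a j) % N := by
      show l * p ^ (j + 1) % N = (p * (l * p ^ j % N)) % N
      conv_lhs => rw [show l * p ^ (j + 1) = p * (l * p ^ j) by ring]
      rw [Nat.mul_mod, Nat.mul_mod p (l * p ^ j % N), Nat.mod_mod_of_dvd _ dvd_rfl]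
    have h2 := Nat.div_add_mod (p * a j) N
    omega
  -- periodicity
  have hpm1 : p ^ m ≡ 1 [MOD N] := by
    refine ((Nat.modEq_iff_dvd' (by omega : 1 ≤ p ^ m)).mpr ?_).symm
    rw [show p ^ m - 1 = N from rfl]
  have hper : ∀ j, a (j + m) = a j := by
    intro j
    show l * p ^ (j + m) % N = l * p ^ j % N
    have : l * p ^ (j + m) ≡ l * p ^ j [MOD N] := by
      calc l * p ^ (j + m) = l * p ^ j * p ^ m := by ring
      _ ≡ l * p ^ j * 1 [MOD N] := Nat.ModEq.mul_left _ hpm1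
      _ = l * p ^ j := by ring
    exact this
  have hper' : ∀ q r, a (r + m * q) = a r := by
    intro q
    induction q with
    | zero => simp
    | succ q ih =>
      intro r
      have h' : r + m * (q + 1) = (r + m * q) + m := by ring
      rw [h', hper]
      exact ih r
  have hmodper : ∀ j, a j = a (j % m) := by
    intro j
    conv_lhs => rw [show j = j % m + m * (j / m) from (Nat.mod_add_div j m).symm]
    exact hper' _ _
  -- membership helper
  have hmem : ∀ j, (a j : ℝ) / N ∈ {z : ℝ | ∃ n < m,
      z = ((l * p ^ n % (p ^ m - 1) : ℕ) : ℝ) / ((p : ℝ) ^ m - 1)} := by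
    intro j
    refine ⟨j % m, Nat.mod_lt _ hm0, ?_⟩
    rw [hNR]
    rw [hmodper j]
  have hx' : x = (a n : ℝ) / N := by rw [hxn, hNR]
  have hbound : ∀ j, (0 : ℝ) ≤ (a j : ℝ) / N ∧ (a j : ℝ) / N < 1 := by
    intro j
    constructor
    · positivity
    · rw [div_lt_one hNRpos]
      exact_mod_cast ha_lt j
  have hklt : ∀ j, p * a j / N < p := by
    intro j
    rw [Nat.div_lt_iff_lt_mul hNpos]
    have h := ha_lt j
    exact Nat.mul_lt_mul_of_le_of_lt (le_refl p) h (by omega)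
  have hppos : (0 : ℝ) < (p : ℝ) := by positivity
  constructor
  · -- part (i)
    have hkeyR : (p : ℝ) * a n = N * (p * a n / N : ℕ) + a (n + 1) := by
      exact_mod_cast hstep n
    have hmain : x = ((a (n + 1) : ℝ) / N + ((p * a n / N : ℕ) : ℝ)) / p := by
      rw [hx']
      field_simp
      linear_combination hkeyR
    refine ⟨((a (n + 1) : ℝ) / N, p * a n / N), ⟨hmem (n + 1), hklt n, hmain⟩, ?_⟩
    rintro ⟨y1, k1⟩ ⟨⟨n1, hn1, hy1⟩, hk1, heq⟩
    rw [hNR] at hy1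
    have hy1' : y1 = (a n1 : ℝ) / N := hy1
    have hsum : y1 + (k1 : ℝ) = (a (n + 1) : ℝ) / N + ((p * a n / N : ℕ) : ℝ) := by
      have h := heq.symm.trans hmain
      rw [div_eq_div_iff hppos.ne' hppos.ne'] at h
      exact mul_right_cancel₀ hppos.ne' h
    obtain ⟨hb1, hb2⟩ := hbound n1
    obtain ⟨hb3, hb4⟩ := hbound (n + 1)
    rw [hy1'] at hsum
    obtain ⟨t, ht⟩ : ∃ t, p * a n / N = t := ⟨_, rfl⟩
    rw [ht] at hsum ⊢
    have hkeq : k1 = t := by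
      have h1 : (k1 : ℝ) < (t : ℝ) + 1 := by linarith
      have h2 : (t : ℝ) < (k1 : ℝ) + 1 := by linarith
      have h1' : k1 < t + 1 := by exact_mod_cast h1
      have h2' : t < k1 + 1 := by exact_mod_cast h2
      omega
    have hyeq : y1 = (a (n + 1) : ℝ) / N := by
      rw [hy1']
      rw [hkeq] at hsum
      linarith
    exact Prod.ext hyeq hkeq
  · -- part (ii)
    have hm1 : (n + m - 1) + 1 = n + m := by omega
    have hkey : p * a (n + m - 1) = N * (p * a (n + m - 1) / N) + a n := by
      have := hstep (n + m - 1)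
      rw [hm1, hper n] at this
      exact this
    set b := a (n + m - 1) with hb
    set q := p * b / N with hq
    have hkeyR : (p : ℝ) * b = N * q + a n := by exact_mod_cast hkey
    refine ⟨((b : ℝ) / N, q), ⟨hmem _, hklt _, ?_⟩, ?_⟩
    · rw [hx']
      field_simp
      linear_combination hkeyR
    · rintro ⟨z1, q1⟩ ⟨⟨n1, hn1, hz1⟩, hq1, heq⟩
      rw [hNR] at hz1
      rw [hz1] at heq
      rw [hx'] at heq
      have e1R : (p : ℝ) * a n1 = a n + q1 * N := by
        have h := heq
        field_simp at h
        apply mul_left_cancel₀ (hNRpos.ne' : (N : ℝ) ≠ 0)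
        linear_combination (N : ℝ) * h
      have e1 : p * a n1 = a n + q1 * N := by exact_mod_cast e1R
      have e2 : p * b = a n + q * N := by rw [hkey]; ring
      have hmeq : (p * a n1) % N = (p * b) % N := by
        rw [e1, e2, Nat.add_mul_mod_self_right, Nat.add_mul_mod_self_right]
      have hmeq2 : a n1 ≡ b [MOD N] := Nat.ModEq.cancel_left_of_coprime hcop.symm hmeq
      have hbeq : a n1 = b := by
        have := hmeq2
        unfold Nat.ModEq at this
        rw [Nat.mod_eq_of_lt (ha_lt n1), Nat.mod_eq_of_lt (ha_lt _)] at this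
        exact this
      have hqeq : q1 = q := by
        rw [hbeq] at e1
        have h5 : a n + q1 * N = a n + q * N := by rw [← e1, e2]
        have h6 : q1 * N = q * N := by omega
        exact Nat.eq_of_mul_eq_mul_right hNpos h6
      have hz1' : z1 = (a n1 : ℝ) / N := hz1
      refine Prod.ext ?_ hqeq
      show z1 = (b : ℝ) / N
      rw [hz1', hbeq]
end
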